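/- arXiv:2409.12802 — 2 statements merged into one kernel-verified Lean document; each statement's English description precedes it below -/
import Mathlib

section
/- Let λ ∈ P⁺ and let μ ∈ wt L(λ) with μ ≠ λ. Then there exist weights μ_0 = μ, μ_1, …, μ_n = λ of L(λ) with μ_{t−1} ≼ μ_t for all t, and (not necessarily distinct) nodes i_1, …, i_n ∈ supp(λ−μ) with n ≤ ht(λ−μ), such that for every 1 ≤ t ≤ n: ⟨μ_t, α_{i_t}^∨⟩ ∈ ℤ_{>0} and μ_{t−1} ∈ [s_{i_t}(μ_t), μ_t] ⊆ wt L(λ). -/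
open scoped BigOperators

attribute [local instance] Classical.propDecidable

namespace KM

/-- The set of `ℤ≥0`-linear combinations of elements of `S`. -/
def cone {W : Type} [AddCommMonoid W] (S : Set W) : Set W :=
  (AddSubmonoid.closure S : AddSubmonoid W)

/-- Minkowski difference of two sets. -/
def mdiff {W : Type} [Sub W] (A B : Set W) : Set W :=
  {x | ∃ a ∈ A, ∃ b ∈ B, x = a - b}

variable {g : Type} [LieRing g] [LieAlgebra ℂ g]

/-- The `μ`-weight space of a `g`-module `V` with respect to a Cartan subalgebra `H`. -/
def wtSpace (H : LieSubalgebra ℂ g) (V : Type) [AddCommGroup V] [Module ℂ V]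
    [LieRingModule g V] [LieModule ℂ g V] (μ : Module.Dual ℂ H) : Submodule ℂ V where
  carrier := {w | ∀ h : H, ⁅(h : g), w⁆ = μ h • w}
  add_mem' := by
    intro a b ha hb h
    rw [lie_add, ha h, hb h, smul_add]
  zero_mem' := by
    intro h
    rw [lie_zero, smul_zero]
  smul_mem' := by
    intro t w hw h
    rw [lie_smul, hw h, smul_smul, smul_smul, mul_comm]

/-- The set of weights of a `g`-module `V`. -/
def wtSet (H : LieSubalgebra ℂ g) (V : Type) [AddCommGroup V] [Module ℂ V]
    [LieRingModule g V] [LieModule ℂ g V] : Set (Module.Dual ℂ H) :=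
  {μ | wtSpace H V μ ≠ ⊥}

/-- Iterated action `x^n · w` of an element `x : g` on a module vector. -/
def actPow {V : Type} [AddCommGroup V] [LieRingModule g V] (x : g) (n : ℕ) (w : V) : V :=
  (fun u => ⁅x, u⁆)^[n] w

/-- The data of a Kac--Moody Lie algebra `g` attached to a generalized Cartan matrix `A`,
with Cartan subalgebra `H`, simple roots `α`, simple coroots `coroot`, and Chevalley
generators `e`, `f`. -/
structure Data (𝓘 : Type) (g : Type) [LieRing g] [LieAlgebra ℂ g] where
  H : LieSubalgebra ℂ g
  α : 𝓘 → Module.Dual ℂ H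
  coroot : 𝓘 → H
  e : 𝓘 → g
  f : 𝓘 → g
  A : 𝓘 → 𝓘 → ℤ
  pairing_eq : ∀ i j, α i (coroot j) = (A j i : ℂ)
  A_diag : ∀ i, A i i = 2
  A_offdiag : ∀ i j, i ≠ j → A i j ≤ 0
  A_zero_iff : ∀ i j, A i j = 0 ↔ A j i = 0
  indepSimple : LinearIndependent ℂ α
  cartan_abelian : ∀ h h' : H, ⁅(h : g), (h' : g)⁆ = 0
  lie_h_e : ∀ (h : H) (i : 𝓘), ⁅(h : g), e i⁆ = α i h • e i
  lie_h_f : ∀ (h : H) (i : 𝓘), ⁅(h : g), f i⁆ = -(α i h) • f i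
  lie_e_f_same : ∀ i, ⁅e i, f i⁆ = (coroot i : g)
  lie_e_f_ne : ∀ i j, i ≠ j → ⁅e i, f j⁆ = 0
  serre_e : ∀ i j, i ≠ j → ((LieAlgebra.ad ℂ g (e i)) ^ (1 - A i j).toNat) (e j) = 0
  serre_f : ∀ i j, i ≠ j → ((LieAlgebra.ad ℂ g (f i)) ^ (1 - A i j).toNat) (f j) = 0
  generates : LieSubalgebra.lieSpan ℂ g ((H : Set g) ∪ Set.range e ∪ Set.range f) = ⊤
  rootDecomp : (⨆ μ : Module.Dual ℂ H, wtSpace H g μ) = ⊤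
  zeroWtSpace : wtSpace H g (0 : Module.Dual ℂ H) = H.toSubmodule
  root_pm : ∀ μ : Module.Dual ℂ H, μ ≠ 0 → wtSpace H g μ ≠ ⊥ →
      μ ∈ cone (Set.range α) ∨ -μ ∈ cone (Set.range α)

variable {𝓘 : Type}

/-- `V` is a highest weight `g`-module with highest weight `lam` and highest weight
vector `v`; equivalently, `V` is a nonzero quotient of the Verma module `M(lam)`. -/
def IsHW (D : Data 𝓘 g) (V : Type) [AddCommGroup V] [Module ℂ V] [LieRingModule g V]
    [LieModule ℂ g V] (lam : Module.Dual ℂ D.H) (v : V) : Prop :=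
  v ≠ 0 ∧ v ∈ wtSpace D.H V lam ∧ (∀ i : 𝓘, ⁅D.e i, v⁆ = 0) ∧
    LieSubmodule.lieSpan ℂ g {v} = ⊤

/-- `J_λ`, the set of integrable directions of `lam`. -/
def Jlam (D : Data 𝓘 g) (lam : Module.Dual ℂ D.H) : Set 𝓘 :=
  {i | ∃ n : ℕ, lam (D.coroot i) = (n : ℂ)}

/-- `Π_J`, the simple roots indexed by `J`. -/
def PiJ (D : Data 𝓘 g) (J : Set 𝓘) : Set (Module.Dual ℂ D.H) := D.α '' J

/-- The root system `Δ` of `g`. -/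
def roots (D : Data 𝓘 g) : Set (Module.Dual ℂ D.H) :=
  {μ | μ ≠ 0 ∧ wtSpace D.H g μ ≠ ⊥}

/-- The positive roots `Δ⁺`. -/
def posRoots (D : Data 𝓘 g) : Set (Module.Dual ℂ D.H) :=
  roots D ∩ cone (Set.range D.α)

/-- The positive roots `Δ⁺_J` of the parabolic subroot system `Δ_J = Δ ∩ ℤΠ_J`. -/
def posRootsJ (D : Data 𝓘 g) (J : Set 𝓘) : Set (Module.Dual ℂ D.H) :=
  posRoots D ∩ (Submodule.span ℤ (D.α '' J) : Set (Module.Dual ℂ D.H))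

/-- `wt_J V := wt V ∩ (λ − ℤ≥0 Π_J)`. -/
def wtJ (D : Data 𝓘 g) (V : Type) [AddCommGroup V] [Module ℂ V] [LieRingModule g V]
    [LieModule ℂ g V] (lam : Module.Dual ℂ D.H) (J : Set 𝓘) : Set (Module.Dual ℂ D.H) :=
  wtSet D.H V ∩ {μ | ∃ x ∈ cone (PiJ D J), μ = lam - x}

/-- A subset `S` of nodes is independent if its induced Dynkin subdiagram has no edges. -/
def IndepSet (D : Data 𝓘 g) (S : Set 𝓘) : Prop :=
  ∀ i ∈ S, ∀ j ∈ S, i ≠ j → D.α i (D.coroot j) = 0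

/-- `J_V`: the union of all minimal independent subsets `I ⊆ J_λ` with
`λ − Σ_{i∈I} (λ(α_i^∨)+1)α_i ∉ wt V`. -/
def JV (D : Data 𝓘 g) (V : Type) [AddCommGroup V] [Module ℂ V] [LieRingModule g V]
    [LieModule ℂ g V] (lam : Module.Dual ℂ D.H) : Set 𝓘 :=
  {i | ∃ I : Finset 𝓘, (↑I : Set 𝓘) ⊆ Jlam D lam ∧ IndepSet D (↑I : Set 𝓘) ∧
    (lam - ∑ k ∈ I, (lam (D.coroot k) + 1) • D.α k) ∉ wtSet D.H V ∧
    (∀ K : Finset 𝓘, K ⊂ I →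
      (lam - ∑ k ∈ K, (lam (D.coroot k) + 1) • D.α k) ∈ wtSet D.H V) ∧
    i ∈ I}


section Dev
set_option linter.unusedSectionVars false

variable {𝓘 : Type} {g : Type} [LieRing g] [LieAlgebra ℂ g]
variable {V : Type} [AddCommGroup V] [Module ℂ V] [LieRingModule g V] [LieModule ℂ g V]

lemma mem_wtSpace {H : LieSubalgebra ℂ g} {ν : Module.Dual ℂ H} {w : V} :
    w ∈ wtSpace H V ν ↔ ∀ h : H, ⁅(h : g), w⁆ = ν h • w := Iff.rfl

/-- Iterated action of `f i`. -/
def fpow (D : Data 𝓘 g) (i : 𝓘) (n : ℕ) (w : V) : V := (fun u => ⁅D.f i, u⁆)^[n] w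

/-- Iterated action of `e i`. -/
def epow (D : Data 𝓘 g) (i : 𝓘) (n : ℕ) (w : V) : V := (fun u => ⁅D.e i, u⁆)^[n] w

variable (D : Data 𝓘 g)

@[simp] lemma fpow_zero (i : 𝓘) (w : V) : fpow D i 0 w = w := rfl
@[simp] lemma epow_zero (i : 𝓘) (w : V) : epow D i 0 w = w := rfl

lemma fpow_succ (i : 𝓘) (n : ℕ) (w : V) : fpow D i (n+1) w = ⁅D.f i, fpow D i n w⁆ :=
  Function.iterate_succ_apply' _ _ _

lemma fpow_succ' (i : 𝓘) (n : ℕ) (w : V) : fpow D i (n+1) w = fpow D i n ⁅D.f i, w⁆ :=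
  Function.iterate_succ_apply _ _ _

lemma epow_succ (i : 𝓘) (n : ℕ) (w : V) : epow D i (n+1) w = ⁅D.e i, epow D i n w⁆ :=
  Function.iterate_succ_apply' _ _ _

lemma epow_succ' (i : 𝓘) (n : ℕ) (w : V) : epow D i (n+1) w = epow D i n ⁅D.e i, w⁆ :=
  Function.iterate_succ_apply _ _ _

@[simp] lemma fpow_zero_vec (i : 𝓘) (n : ℕ) : fpow D i n (0 : V) = 0 := by
  induction n with
  | zero => rfl
  | succ n ih => rw [fpow_succ, ih, lie_zero]

@[simp] lemma epow_zero_vec (i : 𝓘) (n : ℕ) : epow D i n (0 : V) = 0 := by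
  induction n with
  | zero => rfl
  | succ n ih => rw [epow_succ, ih, lie_zero]

lemma fpow_add_pow (i : 𝓘) (m n : ℕ) (w : V) :
    fpow D i (m + n) w = fpow D i m (fpow D i n w) := Function.iterate_add_apply _ _ _ _

lemma epow_add_pow (i : 𝓘) (m n : ℕ) (w : V) :
    epow D i (m + n) w = epow D i m (epow D i n w) := Function.iterate_add_apply _ _ _ _

lemma fpow_eq_zero_mono (i : 𝓘) {m n : ℕ} (h : m ≤ n) {w : V} (hw : fpow D i m w = 0) :
    fpow D i n w = 0 := by
  obtain ⟨k, rfl⟩ := Nat.exists_eq_add_of_le h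
  rw [Nat.add_comm, fpow_add_pow, hw, fpow_zero_vec]

lemma epow_eq_zero_mono (i : 𝓘) {m n : ℕ} (h : m ≤ n) {w : V} (hw : epow D i m w = 0) :
    epow D i n w = 0 := by
  obtain ⟨k, rfl⟩ := Nat.exists_eq_add_of_le h
  rw [Nat.add_comm, epow_add_pow, hw, epow_zero_vec]

/-- bracketing with `e i` raises weights by `α i`. -/
lemma wt_lie_e {ν : Module.Dual ℂ D.H} {w : V} (hw : w ∈ wtSpace D.H V ν) (i : 𝓘) :
    ⁅D.e i, w⁆ ∈ wtSpace D.H V (ν + D.α i) := by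
  intro h
  rw [leibniz_lie, D.lie_h_e h i, smul_lie, hw h, lie_smul, LinearMap.add_apply, add_smul]
  abel

/-- bracketing with `f i` lowers weights by `α i`. -/
lemma wt_lie_f {ν : Module.Dual ℂ D.H} {w : V} (hw : w ∈ wtSpace D.H V ν) (i : 𝓘) :
    ⁅D.f i, w⁆ ∈ wtSpace D.H V (ν - D.α i) := by
  intro h
  rw [leibniz_lie, D.lie_h_f h i, smul_lie, hw h, lie_smul, LinearMap.sub_apply, sub_smul,
    neg_smul]
  abel

lemma wt_fpow {ν : Module.Dual ℂ D.H} {w : V} (hw : w ∈ wtSpace D.H V ν) (i : 𝓘) (n : ℕ) :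
    fpow D i n w ∈ wtSpace D.H V (ν - (n : ℂ) • D.α i) := by
  induction n with
  | zero => simpa using hw
  | succ n ih =>
      rw [fpow_succ]
      have := wt_lie_f D ih i
      convert this using 2
      push_cast
      module

lemma wt_epow {ν : Module.Dual ℂ D.H} {w : V} (hw : w ∈ wtSpace D.H V ν) (i : 𝓘) (n : ℕ) :
    epow D i n w ∈ wtSpace D.H V (ν + (n : ℂ) • D.α i) := by
  induction n with
  | zero => simpa using hw
  | succ n ih =>
      rw [epow_succ]
      have := wt_lie_e D ih i
      convert this using 2
      push_cast
      module

end Dev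
section Dev2
set_option linter.unusedSectionVars false
variable {𝓘 : Type} {g : Type} [LieRing g] [LieAlgebra ℂ g]
variable {V : Type} [AddCommGroup V] [Module ℂ V] [LieRingModule g V] [LieModule ℂ g V]
variable (D : Data 𝓘 g)

lemma alpha_coroot_self (i : 𝓘) : D.α i (D.coroot i) = 2 := by
  rw [D.pairing_eq, D.A_diag]; norm_num

/-- `[e_i, f_i^{n+1} w] = f_i^{n+1} [e_i, w] + (n+1)(⟨ν,αᵢ^∨⟩ - n) f_i^n w` on a
weight vector `w` of weight `ν`. -/
lemma lie_e_fpow {ν : Module.Dual ℂ D.H} {w : V} (hw : w ∈ wtSpace D.H V ν) (i : 𝓘) (n : ℕ) :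
    ⁅D.e i, fpow D i (n+1) w⁆ =
      fpow D i (n+1) ⁅D.e i, w⁆ + (((n:ℂ)+1) * (ν (D.coroot i) - n)) • fpow D i n w := by
  induction n with
  | zero =>
      rw [fpow_succ, fpow_zero, leibniz_lie, D.lie_e_f_same i, hw (D.coroot i),
        fpow_succ, fpow_zero]
      push_cast
      match_scalars <;> ring
  | succ n ih =>
      have hfp : fpow D i (n+1) w ∈ wtSpace D.H V (ν - ((n:ℂ)+1) • D.α i) := by
        have := wt_fpow D hw i (n+1); push_cast at this ⊢; convert this using 2
      rw [fpow_succ D i (n+1), leibniz_lie, D.lie_e_f_same i, hfp (D.coroot i), ih, lie_add,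
        lie_smul, ← fpow_succ D i n, ← fpow_succ D i (n+1)]
      rw [LinearMap.sub_apply, LinearMap.smul_apply, alpha_coroot_self, smul_eq_mul]
      push_cast
      match_scalars <;> ring

/-- `[f_i, e_i^{n+1} w] = e_i^{n+1} [f_i, w] - (n+1)(⟨ν,αᵢ^∨⟩ + n) e_i^n w`. -/
lemma lie_f_epow {ν : Module.Dual ℂ D.H} {w : V} (hw : w ∈ wtSpace D.H V ν) (i : 𝓘) (n : ℕ) :
    ⁅D.f i, epow D i (n+1) w⁆ =
      epow D i (n+1) ⁅D.f i, w⁆ - (((n:ℂ)+1) * (ν (D.coroot i) + n)) • epow D i n w := by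
  have hfe : ⁅D.f i, D.e i⁆ = -(D.coroot i : g) := by
    rw [← lie_skew, D.lie_e_f_same i]
  induction n with
  | zero =>
      rw [epow_succ, epow_zero, leibniz_lie, hfe, neg_lie, hw (D.coroot i),
        epow_succ, epow_zero]
      push_cast
      match_scalars <;> ring
  | succ n ih =>
      have hep : epow D i (n+1) w ∈ wtSpace D.H V (ν + ((n:ℂ)+1) • D.α i) := by
        have := wt_epow D hw i (n+1); push_cast at this ⊢; convert this using 2
      rw [epow_succ D i (n+1), leibniz_lie, hfe, neg_lie, hep (D.coroot i), ih, lie_sub,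
        lie_smul, ← epow_succ D i n, ← epow_succ D i (n+1)]
      rw [LinearMap.add_apply, LinearMap.smul_apply, alpha_coroot_self, smul_eq_mul]
      push_cast
      match_scalars <;> ring

end Dev2
section Dev3
set_option linter.unusedSectionVars false
set_option maxHeartbeats 1000000
variable {𝓘 : Type} {g : Type} [LieRing g] [LieAlgebra ℂ g]
variable {V : Type} [AddCommGroup V] [Module ℂ V] [LieRingModule g V] [LieModule ℂ g V]
variable (D : Data 𝓘 g)

/-- fold of operators `w ↦ [h,w] - c w`. -/
def phiList (L : List (D.H × ℂ)) (w : V) : V :=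
  L.foldr (fun p u => ⁅(p.1 : g), u⁆ - p.2 • u) w

lemma phiList_cons (p : D.H × ℂ) (L : List (D.H × ℂ)) (w : V) :
    phiList D (p :: L) w = ⁅(p.1 : g), phiList D L w⁆ - p.2 • phiList D L w := rfl

@[simp] lemma phiList_zero (L : List (D.H × ℂ)) : phiList D L (0 : V) = 0 := by
  induction L with
  | nil => rfl
  | cons p L ih => rw [phiList_cons, ih, lie_zero, smul_zero, sub_zero]

lemma phiList_add (L : List (D.H × ℂ)) (w w' : V) :
    phiList D L (w + w') = phiList D L w + phiList D L w' := by
  induction L with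
  | nil => rfl
  | cons p L ih => rw [phiList_cons, ih, lie_add, smul_add, phiList_cons, phiList_cons]; abel

lemma phiList_wt {ν : Module.Dual ℂ D.H} {w : V} (hw : w ∈ wtSpace D.H V ν)
    (L : List (D.H × ℂ)) :
    phiList D L w = (L.map fun p => ν p.1 - p.2).prod • w := by
  induction L with
  | nil => simp [phiList]
  | cons p L ih =>
      rw [phiList_cons, ih, lie_smul, hw p.1, List.map_cons, List.prod_cons, smul_smul,
        smul_smul, ← sub_smul]
      congr 1
      ring

lemma phiList_sum (L : List (D.H × ℂ)) (s : Finset (Module.Dual ℂ D.H))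
    (xf : Module.Dual ℂ D.H → V) :
    phiList D L (∑ κ ∈ s, xf κ) = ∑ κ ∈ s, phiList D L (xf κ) := by
  classical
  induction s using Finset.induction with
  | empty => simp
  | insert _ _ hnot ih =>
      rw [Finset.sum_insert hnot, phiList_add, ih, Finset.sum_insert hnot]

/-- Weight vectors of pairwise-distinct weights are linearly independent: a vanishing
sum of weight vectors has all terms zero. -/
lemma wt_independent (s : Finset (Module.Dual ℂ D.H)) (xf : Module.Dual ℂ D.H → V)
    (hxf : ∀ κ ∈ s, xf κ ∈ wtSpace D.H V κ) (hsum : ∑ κ ∈ s, xf κ = 0) :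
    ∀ κ ∈ s, xf κ = 0 := by
  classical
  intro κ0 hκ0
  have hch : ∀ κ : Module.Dual ℂ D.H, κ ≠ κ0 → ∃ h : D.H, κ0 h ≠ κ h := by
    intro κ hk
    by_contra hcon
    push_neg at hcon
    exact hk (by ext h; exact (hcon h).symm)
  set sel : Module.Dual ℂ D.H → D.H := fun κ =>
    if hex : ∃ h : D.H, κ0 h ≠ κ h then hex.choose else 0 with hsel
  have hselp : ∀ κ ∈ s.erase κ0, κ0 (sel κ) ≠ κ (sel κ) := by
    intro κ hκ
    have hkne : κ ≠ κ0 := Finset.ne_of_mem_erase hκ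
    have hex := hch κ hkne
    simp only [hsel, dif_pos hex]
    exact hex.choose_spec
  set L : List (D.H × ℂ) := (s.erase κ0).toList.map fun κ => (sel κ, κ (sel κ)) with hL
  have key : ∀ κ ∈ s, phiList D L (xf κ) =
      ((s.erase κ0).toList.map fun κ' => κ (sel κ') - κ' (sel κ')).prod • xf κ := by
    intro κ hκ
    rw [phiList_wt D (hxf κ hκ), hL, List.map_map]
    rfl
  have hvanish : ∀ κ ∈ s, κ ≠ κ0 → phiList D L (xf κ) = 0 := by
    intro κ hκ hne
    rw [key κ hκ]
    have h0 : (0:ℂ) ∈ (s.erase κ0).toList.map fun κ' => κ (sel κ') - κ' (sel κ') := by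
      refine List.mem_map.mpr ⟨κ, ?_, by ring⟩
      rw [Finset.mem_toList]
      exact Finset.mem_erase.mpr ⟨hne, hκ⟩
    rw [List.prod_eq_zero h0, zero_smul]
  have h1 : ∑ κ ∈ s, phiList D L (xf κ) = 0 := by
    rw [← phiList_sum, hsum, phiList_zero]
  have h2 : ∑ κ ∈ s, phiList D L (xf κ) = phiList D L (xf κ0) :=
    Finset.sum_eq_single_of_mem κ0 hκ0 (fun κ hκ hne => hvanish κ hκ hne)
  have htot : ((s.erase κ0).toList.map
      fun κ' => κ0 (sel κ') - κ' (sel κ')).prod • xf κ0 = 0 := by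
    rw [← key κ0 hκ0, ← h2, h1]
  have hprod : ((s.erase κ0).toList.map
      fun κ' => κ0 (sel κ') - κ' (sel κ')).prod ≠ 0 := by
    apply List.prod_ne_zero
    intro hx
    obtain ⟨κ', hκ', hxe⟩ := List.mem_map.mp hx
    rw [Finset.mem_toList] at hκ'
    exact (hselp κ' hκ') (by linear_combination hxe)
  rw [smul_eq_zero] at htot
  rcases htot with h | h
  · exact absurd h hprod
  · exact h

end Dev3
section Dev4
set_option linter.unusedSectionVars false
set_option maxHeartbeats 1000000
variable {𝓘 : Type} {g : Type} [LieRing g] [LieAlgebra ℂ g]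
variable {V : Type} [AddCommGroup V] [Module ℂ V] [LieRingModule g V] [LieModule ℂ g V]
variable (D : Data 𝓘 g)

/-- `f`-monomial applied to a vector. -/
def fMon (l : List 𝓘) (u : V) : V := l.foldr (fun i w => ⁅D.f i, w⁆) u

@[simp] lemma fMon_nil (u : V) : fMon D [] u = u := rfl

lemma fMon_cons (i : 𝓘) (l : List 𝓘) (u : V) : fMon D (i :: l) u = ⁅D.f i, fMon D l u⁆ := rfl

lemma wt_fMon {κ : Module.Dual ℂ D.H} {u : V} (hu : u ∈ wtSpace D.H V κ) (l : List 𝓘) :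
    fMon D l u ∈ wtSpace D.H V (κ - (l.map D.α).sum) := by
  induction l with
  | nil => simpa using hu
  | cons i l ih =>
      rw [fMon_cons]
      have := wt_lie_f D ih i
      convert this using 2
      rw [List.map_cons, List.sum_cons]
      abel

/-- span of all `f`-monomials applied to `u`. -/
def Mspan (u : V) : Submodule ℂ V :=
  Submodule.span ℂ (Set.range fun l : List 𝓘 => fMon D l u)

lemma mem_Mspan_self (u : V) : u ∈ Mspan D u :=
  Submodule.subset_span ⟨[], rfl⟩

lemma Mspan_lie_f (u : V) (i : 𝓘) {x : V} (hx : x ∈ Mspan D u) : ⁅D.f i, x⁆ ∈ Mspan D u := by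
  induction hx using Submodule.span_induction with
  | mem x hxm => obtain ⟨l, rfl⟩ := hxm; exact Submodule.subset_span ⟨i :: l, rfl⟩
  | zero => rw [lie_zero]; exact Submodule.zero_mem _
  | add x y hx hy ihx ihy => rw [lie_add]; exact Submodule.add_mem _ ihx ihy
  | smul a x hx ihx => rw [lie_smul]; exact Submodule.smul_mem _ a ihx

lemma Mspan_lie_h {κ : Module.Dual ℂ D.H} {u : V} (hu : u ∈ wtSpace D.H V κ) (h : D.H)
    {x : V} (hx : x ∈ Mspan D u) : ⁅(h : g), x⁆ ∈ Mspan D u := by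
  induction hx using Submodule.span_induction with
  | mem x hxm =>
      obtain ⟨l, rfl⟩ := hxm
      rw [wt_fMon D hu l h]
      exact Submodule.smul_mem _ _ (Submodule.subset_span ⟨l, rfl⟩)
  | zero => rw [lie_zero]; exact Submodule.zero_mem _
  | add x y hx hy ihx ihy => rw [lie_add]; exact Submodule.add_mem _ ihx ihy
  | smul a x hx ihx => rw [lie_smul]; exact Submodule.smul_mem _ a ihx

lemma Mspan_lie_e {κ : Module.Dual ℂ D.H} {u : V} (hu : u ∈ wtSpace D.H V κ)
    (he : ∀ j, ⁅D.e j, u⁆ = 0) (j : 𝓘)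
    {x : V} (hx : x ∈ Mspan D u) : ⁅D.e j, x⁆ ∈ Mspan D u := by
  classical
  induction hx using Submodule.span_induction with
  | mem x hxm =>
      obtain ⟨l, rfl⟩ := hxm
      induction l with
      | nil =>
          show ⁅D.e j, fMon D [] u⁆ ∈ Mspan D u
          rw [fMon_nil, he j]; exact Submodule.zero_mem _
      | cons i l ihl =>
          show ⁅D.e j, fMon D (i :: l) u⁆ ∈ Mspan D u
          rw [fMon_cons, leibniz_lie]
          apply Submodule.add_mem
          · by_cases hij : j = i
            · subst hij
              rw [D.lie_e_f_same j, wt_fMon D hu l (D.coroot j)]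
              exact Submodule.smul_mem _ _ (Submodule.subset_span ⟨l, rfl⟩)
            · rw [D.lie_e_f_ne j i hij, zero_lie]
              exact Submodule.zero_mem _
          · exact Mspan_lie_f D u i ihl
  | zero => rw [lie_zero]; exact Submodule.zero_mem _
  | add x y hx hy ihx ihy => rw [lie_add]; exact Submodule.add_mem _ ihx ihy
  | smul a x hx ihx => rw [lie_smul]; exact Submodule.smul_mem _ a ihx

/-- the stabilizer of a submodule of `V` inside `g`, as a Lie subalgebra. -/
def stabLA (M : Submodule ℂ V) : LieSubalgebra ℂ g where
  carrier := {x : g | ∀ m ∈ M, ⁅x, m⁆ ∈ M}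
  add_mem' := fun {x y} hx hy m hm => by
    rw [add_lie]; exact M.add_mem (hx m hm) (hy m hm)
  zero_mem' := fun m hm => by rw [zero_lie]; exact M.zero_mem
  smul_mem' := fun c x hx m hm => by rw [smul_lie]; exact M.smul_mem c (hx m hm)
  lie_mem' := fun {x y} hx hy m hm => by
    rw [lie_lie]; exact M.sub_mem (hx _ (hy m hm)) (hy _ (hx m hm))

lemma lie_mem_of_gen (M : Submodule ℂ V)
    (hH : ∀ (h : D.H), ∀ m ∈ M, ⁅(h : g), m⁆ ∈ M)
    (he : ∀ j, ∀ m ∈ M, ⁅D.e j, m⁆ ∈ M)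
    (hf : ∀ j, ∀ m ∈ M, ⁅D.f j, m⁆ ∈ M) :
    ∀ (x : g), ∀ m ∈ M, ⁅x, m⁆ ∈ M := by
  have hle : LieSubalgebra.lieSpan ℂ g ((D.H : Set g) ∪ Set.range D.e ∪ Set.range D.f) ≤
      stabLA M := by
    rw [LieSubalgebra.lieSpan_le]
    rintro x (hx | hx)
    · rcases hx with hx | hx
      · exact hH ⟨x, hx⟩
      · obtain ⟨j, rfl⟩ := hx; exact he j
    · obtain ⟨j, rfl⟩ := hx; exact hf j
  rw [D.generates] at hle
  intro x
  exact hle (LieSubalgebra.mem_top x)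

/-- package a `g`-stable submodule as a `LieSubmodule`. -/
def mkLieSub (M : Submodule ℂ V) (hM : ∀ (x : g), ∀ m ∈ M, ⁅x, m⁆ ∈ M) :
    LieSubmodule ℂ g V :=
  { M with lie_mem := fun {x m} hm => hM x m hm }

lemma Mspan_eq_top (hsimple : ∀ N : LieSubmodule ℂ g V, N = ⊥ ∨ N = ⊤)
    {κ : Module.Dual ℂ D.H} {u : V} (hu : u ∈ wtSpace D.H V κ) (hne : u ≠ 0)
    (he : ∀ j, ⁅D.e j, u⁆ = 0) : Mspan D u = ⊤ := by
  have hstab : ∀ (x : g), ∀ m ∈ Mspan D u, ⁅x, m⁆ ∈ Mspan D u :=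
    lie_mem_of_gen D _ (fun h => fun m hm => Mspan_lie_h D hu h hm)
      (fun j => fun m hm => Mspan_lie_e D hu he j hm)
      (fun j => fun m hm => Mspan_lie_f D u j hm)
  rcases hsimple (mkLieSub (Mspan D u) hstab) with hbot | htop
  · exfalso
    apply hne
    have : u ∈ mkLieSub (Mspan D u) hstab := mem_Mspan_self D u
    rw [hbot] at this
    simpa using this
  · rw [Submodule.eq_top_iff']
    intro x
    have : x ∈ mkLieSub (Mspan D u) hstab := htop ▸ LieSubmodule.mem_top x
    exact this

end Dev4
section Dev5
set_option linter.unusedSectionVars false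
set_option maxHeartbeats 1000000
variable {𝓘 : Type} [Fintype 𝓘] [DecidableEq 𝓘] {g : Type} [LieRing g] [LieAlgebra ℂ g]
variable {V : Type} [AddCommGroup V] [Module ℂ V] [LieRingModule g V] [LieModule ℂ g V]
variable (D : Data 𝓘 g)

lemma map_alpha_sum (l : List 𝓘) :
    (l.map D.α).sum = ∑ i, (l.count i : ℂ) • D.α i := by
  rw [Finset.sum_list_map_count]
  rw [← Finset.sum_subset (Finset.subset_univ l.toFinset)]
  · refine Finset.sum_congr rfl fun i _ => ?_
    rw [Nat.cast_smul_eq_nsmul]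
  · intro i _ hi
    rw [List.count_eq_zero_of_not_mem (fun hm => hi (List.mem_toFinset.mpr hm)),
      Nat.cast_zero, zero_smul]

/-- every element of the monomial span decomposes into weight components with
weights of the form `κ - ∑ dᵢ αᵢ`. -/
lemma Mspan_decomp {κ : Module.Dual ℂ D.H} {u : V} (hu : u ∈ wtSpace D.H V κ)
    {x : V} (hx : x ∈ Mspan D u) :
    ∃ s : Finset (Module.Dual ℂ D.H), ∃ y : Module.Dual ℂ D.H → V,
      (∀ κ' ∈ s, y κ' ∈ wtSpace D.H V κ' ∧
        ∃ d : 𝓘 → ℕ, κ' = κ - ∑ i, (d i : ℂ) • D.α i) ∧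
      x = ∑ κ' ∈ s, y κ' := by
  classical
  induction hx using Submodule.span_induction with
  | mem x hxm =>
      obtain ⟨l, rfl⟩ := hxm
      refine ⟨{κ - (l.map D.α).sum}, fun _ => fMon D l u, ?_, by rw [Finset.sum_singleton]⟩
      intro κ' hκ'
      rw [Finset.mem_singleton] at hκ'
      subst hκ'
      exact ⟨wt_fMon D hu l, fun i => l.count i, by rw [map_alpha_sum]⟩
  | zero => exact ⟨∅, fun _ => 0, fun κ' h => absurd h (Finset.notMem_empty κ'), by simp⟩
  | add x y hx hy ihx ihy =>
      obtain ⟨s₁, y₁, hy₁, rfl⟩ := ihx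
      obtain ⟨s₂, y₂, hy₂, rfl⟩ := ihy
      refine ⟨s₁ ∪ s₂,
        fun κ' => (if κ' ∈ s₁ then y₁ κ' else 0) + (if κ' ∈ s₂ then y₂ κ' else 0), ?_, ?_⟩
      · intro κ' hκ'
        constructor
        · apply Submodule.add_mem
          · split_ifs with h
            · exact (hy₁ κ' h).1
            · exact Submodule.zero_mem _
          · split_ifs with h
            · exact (hy₂ κ' h).1
            · exact Submodule.zero_mem _
        · rcases Finset.mem_union.mp hκ' with h | h
          · exact (hy₁ κ' h).2
          · exact (hy₂ κ' h).2
      · rw [Finset.sum_add_distrib, Finset.sum_ite_mem, Finset.sum_ite_mem,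
          Finset.union_inter_cancel_left, Finset.union_inter_cancel_right]
  | smul a x hx ihx =>
      obtain ⟨s, y, hy, rfl⟩ := ihx
      exact ⟨s, fun κ' => a • y κ',
        fun κ' hκ' => ⟨Submodule.smul_mem _ a (hy κ' hκ').1, (hy κ' hκ').2⟩,
        by rw [Finset.smul_sum]⟩

/-- main structural lemma: if `u` is a nonzero weight vector of weight `κ` killed by all
`e j`, then (by simplicity) every weight of `V` has the form `κ - ∑ dᵢ αᵢ`. -/
lemma wt_below (hsimple : ∀ N : LieSubmodule ℂ g V, N = ⊥ ∨ N = ⊤)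
    {κ : Module.Dual ℂ D.H} {u : V} (hu : u ∈ wtSpace D.H V κ) (hne : u ≠ 0)
    (he : ∀ j, ⁅D.e j, u⁆ = 0)
    {ν : Module.Dual ℂ D.H} (hν : ν ∈ wtSet D.H V) :
    ∃ d : 𝓘 → ℕ, ν = κ - ∑ i, (d i : ℂ) • D.α i := by
  classical
  by_contra hno
  obtain ⟨x, hxmem, hxne⟩ := (Submodule.ne_bot_iff _).mp hν
  have hxM : x ∈ Mspan D u := by
    rw [Mspan_eq_top D hsimple hu hne he]; exact Submodule.mem_top
  obtain ⟨s, y, hy, hxsum⟩ := Mspan_decomp D hu hxM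
  have hνs : ν ∉ s := fun hmem => hno (hy ν hmem).2
  set xf : Module.Dual ℂ D.H → V := fun κ' => if κ' = ν then -x else y κ' with hxf
  have hsum : ∑ κ' ∈ insert ν s, xf κ' = 0 := by
    rw [Finset.sum_insert hνs]
    have : ∑ κ' ∈ s, xf κ' = ∑ κ' ∈ s, y κ' := by
      refine Finset.sum_congr rfl fun κ' hκ' => ?_
      rw [hxf]
      simp only [if_neg (fun h : κ' = ν => hνs (h ▸ hκ'))]
    rw [this, ← hxsum, hxf]
    simp
  have := wt_independent D (insert ν s)
    xf
    (by
      intro κ' hκ'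
      rcases Finset.mem_insert.mp hκ' with h | h
      · subst h
        rw [hxf]; simp only [if_pos rfl]
        exact Submodule.neg_mem _ hxmem
      · rw [hxf]
        simp only [if_neg (fun he : κ' = ν => hνs (he ▸ h))]
        exact (hy κ' h).1)
    hsum ν (Finset.mem_insert_self ν s)
  exact hxne (by simpa [hxf] using this)

end Dev5
section Dev6
set_option linter.unusedSectionVars false
set_option maxHeartbeats 1000000
variable {𝓘 : Type} [Fintype 𝓘] [DecidableEq 𝓘] {g : Type} [LieRing g] [LieAlgebra ℂ g]
variable {V : Type} [AddCommGroup V] [Module ℂ V] [LieRingModule g V] [LieModule ℂ g V]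
variable (D : Data 𝓘 g)

/-- iterated `ad (f i)` on `g`. -/
def adf (i : 𝓘) (k : ℕ) (y : g) : g := (fun z => ⁅D.f i, z⁆)^[k] y

@[simp] lemma adf_zero (i : 𝓘) (y : g) : adf D i 0 y = y := rfl

lemma adf_succ (i : 𝓘) (k : ℕ) (y : g) : adf D i (k+1) y = ⁅D.f i, adf D i k y⁆ :=
  Function.iterate_succ_apply' _ _ _

@[simp] lemma adf_zero_elt (i : 𝓘) (k : ℕ) : adf D i k (0 : g) = 0 := by
  induction k with
  | zero => rfl
  | succ k ih => rw [adf_succ, ih, lie_zero]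

lemma adf_add_pow (i : 𝓘) (m k : ℕ) (y : g) :
    adf D i (m + k) y = adf D i m (adf D i k y) := Function.iterate_add_apply _ _ _ _

lemma adf_eq_zero_mono (i : 𝓘) {m n : ℕ} (h : m ≤ n) {y : g} (hy : adf D i m y = 0) :
    adf D i n y = 0 := by
  obtain ⟨k, rfl⟩ := Nat.exists_eq_add_of_le h
  rw [Nat.add_comm, adf_add_pow, hy, adf_zero_elt]

lemma fpow_add_vec (i : 𝓘) (n : ℕ) (w w' : V) :
    fpow D i n (w + w') = fpow D i n w + fpow D i n w' := by
  induction n with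
  | zero => rfl
  | succ n ih => rw [fpow_succ, ih, lie_add, fpow_succ, fpow_succ]

lemma fpow_smul_vec (i : 𝓘) (n : ℕ) (c : ℂ) (w : V) :
    fpow D i n (c • w) = c • fpow D i n w := by
  induction n with
  | zero => rfl
  | succ n ih => rw [fpow_succ, ih, lie_smul, fpow_succ]

lemma lie_sum_vec {ι : Type*} (x : g) (s : Finset ι) (fv : ι → V) :
    ⁅x, ∑ k ∈ s, fv k⁆ = ∑ k ∈ s, ⁅x, fv k⁆ := by
  classical
  induction s using Finset.induction with
  | empty => simp
  | insert _ _ hnot ih => rw [Finset.sum_insert hnot, lie_add, ih, Finset.sum_insert hnot]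

/-- iterated Leibniz rule. -/
lemma fpow_lie_binom (i : 𝓘) (y : g) (w : V) : ∀ n : ℕ,
    fpow D i n ⁅y, w⁆ =
      ∑ k ∈ Finset.range (n+1), (n.choose k : ℂ) • ⁅adf D i k y, fpow D i (n-k) w⁆
  | 0 => by simp
  | (n+1) => by
      rw [fpow_succ, fpow_lie_binom i y w n, lie_sum_vec]
      have hterm : ∀ k ∈ Finset.range (n+1),
          ⁅D.f i, (n.choose k : ℂ) • ⁅adf D i k y, fpow D i (n-k) w⁆⁆
            = (n.choose k : ℂ) • ⁅adf D i (k+1) y, fpow D i (n+1-(k+1)) w⁆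
              + (n.choose k : ℂ) • ⁅adf D i k y, fpow D i (n-k+1) w⁆ := by
        intro k hk
        rw [lie_smul, leibniz_lie, smul_add, adf_succ, fpow_succ]
        have : n + 1 - (k + 1) = n - k := by omega
        rw [this]
      rw [Finset.sum_congr rfl hterm, Finset.sum_add_distrib]
      have h2 : ∑ k ∈ Finset.range (n+1), (n.choose k : ℂ) • ⁅adf D i k y, fpow D i (n-k+1) w⁆
          = ∑ k ∈ Finset.range (n+1),
              (n.choose k : ℂ) • ⁅adf D i k y, fpow D i (n+1-k) w⁆ := by
        refine Finset.sum_congr rfl fun k hk => ?_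
        rw [Finset.mem_range] at hk
        have : n - k + 1 = n + 1 - k := by omega
        rw [this]
      rw [h2]
      -- now expand the RHS
      rw [Finset.sum_range_succ' (fun k => ((n+1).choose k : ℂ) • ⁅adf D i k y, fpow D i (n+1-k) w⁆) (n+1)]
      have h3 : ∀ k, (((n+1).choose (k+1) : ℕ) : ℂ) = (n.choose k : ℂ) + (n.choose (k+1) : ℂ) := by
        intro k
        rw [Nat.choose_succ_succ]
        push_cast
        ring
      have h4 : ∑ k ∈ Finset.range (n+1),
            ((n+1).choose (k+1) : ℂ) • ⁅adf D i (k+1) y, fpow D i (n+1-(k+1)) w⁆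
          = ∑ k ∈ Finset.range (n+1),
              (n.choose k : ℂ) • ⁅adf D i (k+1) y, fpow D i (n+1-(k+1)) w⁆
            + ∑ k ∈ Finset.range (n+1),
              (n.choose (k+1) : ℂ) • ⁅adf D i (k+1) y, fpow D i (n+1-(k+1)) w⁆ := by
        rw [← Finset.sum_add_distrib]
        refine Finset.sum_congr rfl fun k hk => ?_
        rw [h3, add_smul]
      rw [h4]
      have h5 : ∑ k ∈ Finset.range (n+1),
            (n.choose (k+1) : ℂ) • ⁅adf D i (k+1) y, fpow D i (n+1-(k+1)) w⁆
            + ((n+1).choose 0 : ℂ) • ⁅adf D i 0 y, fpow D i (n+1-0) w⁆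
          = ∑ k ∈ Finset.range (n+1),
              (n.choose k : ℂ) • ⁅adf D i k y, fpow D i (n+1-k) w⁆ := by
        rw [Finset.sum_range_succ' (fun k => (n.choose k : ℂ) • ⁅adf D i k y, fpow D i (n+1-k) w⁆) n]
        rw [Finset.sum_range_succ (fun k => (n.choose (k+1) : ℂ) • ⁅adf D i (k+1) y, fpow D i (n+1-(k+1)) w⁆) n]
        rw [Nat.choose_succ_self]
        push_cast
        rw [zero_smul, add_zero, Nat.choose_zero_right, Nat.choose_zero_right]
      rw [← h5]
      abel

/-- if `ad (f i)` kills `y` eventually and `f i` kills `w` eventually, then `f i` kills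
`[y, w]` eventually. -/
lemma fpow_lie_nil (i : 𝓘) {y : g} {w : V} {M n : ℕ} (hy : adf D i M y = 0)
    (hw : fpow D i n w = 0) : fpow D i (M + n) ⁅y, w⁆ = 0 := by
  rw [fpow_lie_binom]
  apply Finset.sum_eq_zero
  intro k hk
  by_cases hkM : M ≤ k
  · rw [adf_eq_zero_mono D i hkM hy, zero_lie, smul_zero]
  · have : n ≤ M + n - k := by omega
    rw [fpow_eq_zero_mono D i this hw, lie_zero, smul_zero]

lemma adf_nil_h (i : 𝓘) (h : D.H) : adf D i 2 ((h : g)) = 0 := by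
  have h1 : adf D i 1 ((h : g)) = (D.α i h) • D.f i := by
    rw [adf_succ, adf_zero, ← lie_skew, D.lie_h_f h i, neg_smul, neg_neg]
  rw [show (2:ℕ) = 1 + 1 from rfl, adf_add_pow, h1, adf_succ, adf_zero, lie_smul,
    lie_self, smul_zero]

lemma adf_nil_e (i j : 𝓘) : ∃ M, adf D i M (D.e j) = 0 := by
  by_cases hij : j = i
  · subst hij
    refine ⟨3, ?_⟩
    have h1 : adf D j 1 (D.e j) = -(D.coroot j : g) := by
      rw [adf_succ, adf_zero, ← lie_skew, D.lie_e_f_same j]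
    have h2 : adf D j 2 (D.e j) = -((2 : ℂ) • D.f j) := by
      rw [show (2:ℕ) = 1 + 1 from rfl, adf_add_pow, h1, adf_succ, adf_zero, lie_neg,
        ← lie_skew, D.lie_h_f (D.coroot j) j, alpha_coroot_self, neg_smul, neg_neg]
    rw [show (3:ℕ) = 1 + 2 from rfl, adf_add_pow, h2, adf_succ, adf_zero, lie_neg,
      lie_smul, lie_self, smul_zero, neg_zero]
  · refine ⟨1, ?_⟩
    rw [adf_succ, adf_zero, ← lie_skew, D.lie_e_f_ne j i hij, neg_zero]

lemma adf_nil_f (i j : 𝓘) : ∃ M, adf D i M (D.f j) = 0 := by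
  by_cases hij : i = j
  · subst hij
    exact ⟨1, by rw [adf_succ, adf_zero, lie_self]⟩
  · refine ⟨(1 - D.A i j).toNat, ?_⟩
    have hs := D.serre_f i j hij
    have had : ∀ k (y : g), ((LieAlgebra.ad ℂ g (D.f i)) ^ k) y = adf D i k y := by
      intro k
      induction k with
      | zero => intro y; rfl
      | succ k ih =>
          intro y
          rw [pow_succ', Module.End.mul_apply, ih, LieAlgebra.ad_apply, ← adf_succ]
    rw [had] at hs
    exact hs

/-- `f_i^{λ(αᵢ^∨)+1} v = 0` for the highest weight vector. -/
lemma fpow_hw_zero (hsimple : ∀ N : LieSubmodule ℂ g V, N = ⊥ ∨ N = ⊤)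
    {lam : Module.Dual ℂ D.H} {v : V} (hV : IsHW D V lam v) (i : 𝓘) {k : ℕ}
    (hk : lam (D.coroot i) = (k : ℂ)) :
    fpow D i (k+1) v = 0 := by
  classical
  obtain ⟨hv0, hvwt, hve, hvspan⟩ := hV
  set u : V := fpow D i (k+1) v with hu
  have huwt : u ∈ wtSpace D.H V (lam - ((k:ℂ)+1) • D.α i) := by
    have := wt_fpow D hvwt i (k+1)
    push_cast at this
    exact this
  have hue : ∀ j, ⁅D.e j, u⁆ = 0 := by
    intro j
    by_cases hij : j = i
    · subst hij
      rw [hu, lie_e_fpow D hvwt j k, hve j, fpow_zero_vec, hk, sub_self, mul_zero,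
        zero_smul, add_zero]
    · -- e j commutes with powers of f i
      have hcomm : ∀ n, ⁅D.e j, fpow D i n v⁆ = fpow D i n ⁅D.e j, v⁆ := by
        intro n
        induction n with
        | zero => rfl
        | succ n ih =>
            rw [fpow_succ, leibniz_lie, D.lie_e_f_ne j i hij, zero_lie, zero_add, ih, fpow_succ]
      rw [hu, hcomm, hve j, fpow_zero_vec]
  by_contra hne
  have hlamwt : lam ∈ wtSet D.H V := by
    rw [wtSet, Set.mem_setOf_eq, Submodule.ne_bot_iff]
    exact ⟨v, hvwt, hv0⟩
  obtain ⟨d, hd⟩ := wt_below D hsimple huwt hne hue hlamwt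
  -- lam = lam - (k+1) α i - ∑ d, contradiction
  rw [sub_sub, eq_sub_iff_add_eq] at hd
  have h0 : ((k:ℂ)+1) • D.α i + ∑ i0, (d i0 : ℂ) • D.α i0 = 0 := add_eq_left.mp hd
  have hsum0 : ∑ i0, ((d i0 : ℂ) + if i0 = i then ((k:ℂ)+1) else 0) • D.α i0 = 0 := by
    simp only [add_smul, Finset.sum_add_distrib, ite_smul, zero_smul, Finset.sum_ite_eq',
      Finset.mem_univ, if_true]
    rw [← add_smul]
    rw [add_comm]
    exact h0
  have hco := Fintype.linearIndependent_iff.mp D.indepSimple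
      (fun i0 => (d i0 : ℂ) + if i0 = i then ((k:ℂ)+1) else 0) hsum0 i
  have hco' : (d i : ℂ) + ((k:ℂ)+1) = 0 := by simpa using hco
  have hnat : ((d i + (k+1) : ℕ) : ℂ) = ((0:ℕ) : ℂ) := by push_cast; linear_combination hco'
  have := Nat.cast_injective (R := ℂ) hnat
  omega

/-- `f i` is locally nilpotent on `V`. -/
lemma fpow_locnil (hsimple : ∀ N : LieSubmodule ℂ g V, N = ⊥ ∨ N = ⊤)
    {lam : Module.Dual ℂ D.H} {v : V} (hV : IsHW D V lam v)
    (hP : ∀ i : 𝓘, ∃ k : ℕ, lam (D.coroot i) = (k : ℂ)) (i : 𝓘) (w : V) :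
    ∃ n, fpow D i n w = 0 := by
  classical
  set M : Submodule ℂ V :=
    { carrier := {w | ∃ n, fpow D i n w = 0}
      add_mem' := by
        rintro a b ⟨n₁, h₁⟩ ⟨n₂, h₂⟩
        exact ⟨max n₁ n₂, by
          rw [fpow_add_vec, fpow_eq_zero_mono D i (le_max_left n₁ n₂) h₁,
            fpow_eq_zero_mono D i (le_max_right n₁ n₂) h₂, add_zero]⟩
      zero_mem' := ⟨0, rfl⟩
      smul_mem' := by
        rintro c w ⟨n, hn⟩
        exact ⟨n, by rw [fpow_smul_vec, hn, smul_zero]⟩ } with hM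
  have hstab : ∀ (x : g), ∀ m ∈ M, ⁅x, m⁆ ∈ M := by
    apply lie_mem_of_gen D M
    · rintro h m ⟨n, hn⟩
      exact ⟨2 + n, fpow_lie_nil D i (adf_nil_h D i h) hn⟩
    · rintro j m ⟨n, hn⟩
      obtain ⟨Me, hMe⟩ := adf_nil_e D i j
      exact ⟨Me + n, fpow_lie_nil D i hMe hn⟩
    · rintro j m ⟨n, hn⟩
      obtain ⟨Mf, hMf⟩ := adf_nil_f D i j
      exact ⟨Mf + n, fpow_lie_nil D i hMf hn⟩
  have hvM : v ∈ M := by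
    obtain ⟨k, hk⟩ := hP i
    exact ⟨k+1, fpow_hw_zero D hsimple hV i hk⟩
  have htop : ∀ w : V, w ∈ M := by
    have hle : LieSubmodule.lieSpan ℂ g {v} ≤ mkLieSub M hstab := by
      rw [LieSubmodule.lieSpan_le]
      intro x hx
      rw [Set.mem_singleton_iff] at hx
      subst hx
      exact hvM
    rw [hV.2.2.2] at hle
    intro w
    exact hle (LieSubmodule.mem_top w)
  exact htop w

end Dev6
section Dev7
set_option linter.unusedSectionVars false
set_option maxHeartbeats 1000000
variable {𝓘 : Type} [Fintype 𝓘] [DecidableEq 𝓘] {g : Type} [LieRing g] [LieAlgebra ℂ g]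
variable {V : Type} [AddCommGroup V] [Module ℂ V] [LieRingModule g V] [LieModule ℂ g V]
variable (D : Data 𝓘 g)

lemma alpha_comb_eq {c c' : 𝓘 → ℂ} (h : ∑ i0, c i0 • D.α i0 = ∑ i0, c' i0 • D.α i0)
    (i : 𝓘) : c i = c' i := by
  have h0 : ∑ i0, (c i0 - c' i0) • D.α i0 = 0 := by
    simp only [sub_smul, Finset.sum_sub_distrib, h, sub_self]
  have := Fintype.linearIndependent_iff.mp D.indepSimple (fun i0 => c i0 - c' i0) h0 i
  exact sub_eq_zero.mp (by simpa using this)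

lemma wt_rep (hsimple : ∀ N : LieSubmodule ℂ g V, N = ⊥ ∨ N = ⊤)
    {lam : Module.Dual ℂ D.H} {v : V} (hV : IsHW D V lam v)
    {ν : Module.Dual ℂ D.H} (hν : ν ∈ wtSet D.H V) :
    ∃ d : 𝓘 → ℕ, ν = lam - ∑ i, (d i : ℂ) • D.α i :=
  wt_below D hsimple hV.2.1 hV.1 hV.2.2.1 hν

lemma eig_int (hP : ∀ i : 𝓘, ∃ k : ℕ, lam (D.coroot i) = (k : ℂ))
    {ν : Module.Dual ℂ D.H} {d : 𝓘 → ℕ}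
    (hd : ν = lam - ∑ i0, (d i0 : ℂ) • D.α i0) (i : 𝓘) :
    ∃ m : ℤ, ν (D.coroot i) = (m : ℂ) := by
  obtain ⟨k, hk⟩ := hP i
  refine ⟨(k : ℤ) - ∑ l, (d l : ℤ) * D.A i l, ?_⟩
  rw [hd, LinearMap.sub_apply, hk]
  have hsum : (∑ i0, (d i0 : ℂ) • D.α i0) (D.coroot i) = ∑ l, (d l : ℂ) * (D.A i l : ℂ) := by
    rw [LinearMap.coe_sum, Finset.sum_apply]
    refine Finset.sum_congr rfl fun l _ => ?_
    rw [LinearMap.smul_apply, smul_eq_mul, D.pairing_eq]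
  rw [hsum]
  push_cast
  ring

/-- upper bound on `e`-strings from coefficient positivity. -/
lemma epow_le (hsimple : ∀ N : LieSubmodule ℂ g V, N = ⊥ ∨ N = ⊤)
    {lam : Module.Dual ℂ D.H} {v : V} (hV : IsHW D V lam v)
    {ν : Module.Dual ℂ D.H} {d : 𝓘 → ℕ}
    (hd : ν = lam - ∑ i0, (d i0 : ℂ) • D.α i0)
    {w : V} (hw : w ∈ wtSpace D.H V ν) {i : 𝓘} {n : ℕ}
    (hne : epow D i n w ≠ 0) : n ≤ d i := by
  classical
  have hwt := wt_epow D hw i n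
  have hmem : ν + (n : ℂ) • D.α i ∈ wtSet D.H V := by
    rw [wtSet, Set.mem_setOf_eq, Submodule.ne_bot_iff]
    exact ⟨epow D i n w, hwt, hne⟩
  obtain ⟨d', hd'⟩ := wt_rep D hsimple hV hmem
  have h1 : lam - (∑ i0, (d i0 : ℂ) • D.α i0) + (n : ℂ) • D.α i
      = lam - ∑ i0, (d' i0 : ℂ) • D.α i0 := by
    rw [← hd]; exact hd'
  have h3 := sub_eq_zero.mpr h1
  have h4 : (∑ i0, (d' i0 : ℂ) • D.α i0) + (n : ℂ) • D.α i
      - ∑ i0, (d i0 : ℂ) • D.α i0 = 0 := by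
    rw [← h3]; abel
  have key := sub_eq_zero.mp h4
  have expand : ∑ i0, ((d' i0 : ℂ) + if i0 = i then (n : ℂ) else 0) • D.α i0
      = (∑ i0, (d' i0 : ℂ) • D.α i0) + (n : ℂ) • D.α i := by
    simp only [add_smul, Finset.sum_add_distrib, ite_smul, zero_smul, Finset.sum_ite_eq',
      Finset.mem_univ, if_true]
  have hco := alpha_comb_eq D (c := fun i0 => (d' i0 : ℂ) + if i0 = i then (n : ℂ) else 0)
    (c' := fun i0 => (d i0 : ℂ)) (by rw [expand, key]) i
  have hco' : (d' i : ℂ) + (n : ℂ) = (d i : ℂ) := by simpa using hco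
  have : d' i + n = d i := by exact_mod_cast hco'
  omega

/-- existence of the top of an `e`-string. -/
lemma exists_top (hsimple : ∀ N : LieSubmodule ℂ g V, N = ⊥ ∨ N = ⊤)
    {lam : Module.Dual ℂ D.H} {v : V} (hV : IsHW D V lam v)
    {ν : Module.Dual ℂ D.H} {d : 𝓘 → ℕ}
    (hd : ν = lam - ∑ i0, (d i0 : ℂ) • D.α i0)
    {w : V} (hw : w ∈ wtSpace D.H V ν) (hw0 : w ≠ 0) (i : 𝓘) :
    ∃ p, epow D i p w ≠ 0 ∧ epow D i (p+1) w = 0 ∧ ∀ j, epow D i j w ≠ 0 → j ≤ p := by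
  classical
  have hex : ∃ n, epow D i n w = 0 := by
    refine ⟨d i + 1, ?_⟩
    by_contra hcon
    have := epow_le D hsimple hV hd hw hcon
    omega
  have h1 : 0 < Nat.find hex := Nat.pos_of_ne_zero (by
    intro h
    apply hw0
    have := Nat.find_spec hex
    rw [h] at this
    exact this)
  refine ⟨Nat.find hex - 1, ?_, ?_, ?_⟩
  · exact Nat.find_min hex (by omega)
  · have heq : Nat.find hex - 1 + 1 = Nat.find hex := by omega
    rw [heq]
    exact Nat.find_spec hex
  · intro j hj
    by_contra hcon
    push_neg at hcon
    exact hj (epow_eq_zero_mono D i (by omega : Nat.find hex ≤ j) (Nat.find_spec hex))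

/-- Fact T : the eigenvalue of a top vector equals the length of its `f`-string. -/
lemma factT (hsimple : ∀ N : LieSubmodule ℂ g V, N = ⊥ ∨ N = ⊤)
    {lam : Module.Dual ℂ D.H} {v : V} (hV : IsHW D V lam v)
    (hP : ∀ i : 𝓘, ∃ k : ℕ, lam (D.coroot i) = (k : ℂ))
    {ν : Module.Dual ℂ D.H} {w : V} (hw : w ∈ wtSpace D.H V ν) (hw0 : w ≠ 0)
    {i : 𝓘} (he : ⁅D.e i, w⁆ = 0) :
    ∃ q : ℕ, ν (D.coroot i) = (q : ℂ) ∧ (∀ j ≤ q, fpow D i j w ≠ 0) ∧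
      fpow D i (q+1) w = 0 := by
  classical
  have hex : ∃ n, fpow D i n w = 0 := fpow_locnil D hsimple hV hP i w
  have h1 : 0 < Nat.find hex := Nat.pos_of_ne_zero (by
    intro h
    apply hw0
    have := Nat.find_spec hex
    rw [h] at this
    exact this)
  set q := Nat.find hex - 1 with hq
  have hq1 : q + 1 = Nat.find hex := by omega
  have hzero : fpow D i (q+1) w = 0 := by rw [hq1]; exact Nat.find_spec hex
  have hnz : ∀ j ≤ q, fpow D i j w ≠ 0 := fun j hj => Nat.find_min hex (by omega)
  refine ⟨q, ?_, hnz, hzero⟩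
  have hid := lie_e_fpow D hw i q
  rw [hzero, lie_zero, he, fpow_zero_vec, zero_add] at hid
  have := hid.symm
  rw [smul_eq_zero] at this
  rcases this with h | h
  · have hne : ((q:ℂ) + 1) ≠ 0 := by
      have : ((q:ℂ) + 1) = ((q+1 : ℕ) : ℂ) := by push_cast; ring
      rw [this]
      exact_mod_cast Nat.succ_ne_zero q
    rcases mul_eq_zero.mp h with h' | h'
    · exact absurd h' hne
    · linear_combination h'
  · exact absurd h (hnz q le_rfl)

/-- Fact B : the eigenvalue of a bottom vector is minus the length of its `e`-string. -/
lemma factB (hsimple : ∀ N : LieSubmodule ℂ g V, N = ⊥ ∨ N = ⊤)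
    {lam : Module.Dual ℂ D.H} {v : V} (hV : IsHW D V lam v)
    {ν : Module.Dual ℂ D.H} {d : 𝓘 → ℕ}
    (hd : ν = lam - ∑ i0, (d i0 : ℂ) • D.α i0)
    {w : V} (hw : w ∈ wtSpace D.H V ν) (hw0 : w ≠ 0)
    {i : 𝓘} (hf : ⁅D.f i, w⁆ = 0) :
    ∃ p : ℕ, ν (D.coroot i) = -(p : ℂ) ∧ epow D i p w ≠ 0 := by
  obtain ⟨p, hp1, hp2, _⟩ := exists_top D hsimple hV hd hw hw0 i
  refine ⟨p, ?_, hp1⟩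
  have hid := lie_f_epow D hw i p
  rw [hp2, lie_zero, hf, epow_zero_vec, zero_sub] at hid
  have := hid.symm
  rw [neg_eq_zero, smul_eq_zero] at this
  rcases this with h | h
  · have hne : ((p:ℂ) + 1) ≠ 0 := by
      have : ((p:ℂ) + 1) = ((p+1 : ℕ) : ℂ) := by push_cast; ring
      rw [this]
      exact_mod_cast Nat.succ_ne_zero p
    rcases mul_eq_zero.mp h with h' | h'
    · exact absurd h' hne
    · linear_combination h'
  · exact absurd h hp1

/-- mirror string lemma: a weight vector with nonpositive integral eigenvalue `m`
has a nonvanishing `e`-string of length at least `-m`. -/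
lemma mirror (hsimple : ∀ N : LieSubmodule ℂ g V, N = ⊥ ∨ N = ⊤)
    {lam : Module.Dual ℂ D.H} {v : V} (hV : IsHW D V lam v)
    (hP : ∀ i : 𝓘, ∃ k : ℕ, lam (D.coroot i) = (k : ℂ)) (i : 𝓘) :
    ∀ n0 : ℕ, ∀ (ν : Module.Dual ℂ D.H) (w : V), w ∈ wtSpace D.H V ν → w ≠ 0 →
      fpow D i n0 w = 0 → ∀ m : ℤ, ν (D.coroot i) = (m : ℂ) → m ≤ 0 →
      epow D i (-m).toNat w ≠ 0 := by
  intro n0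
  induction n0 with
  | zero =>
      intro ν w hw hw0 hnil m hm hm0
      exact absurd hnil hw0
  | succ n0 ih =>
      intro ν w hw hw0 hnil m hm hm0
      by_cases hfw : ⁅D.f i, w⁆ = 0
      · -- bottom vector
        have hνwt : ν ∈ wtSet D.H V := by
          rw [wtSet, Set.mem_setOf_eq, Submodule.ne_bot_iff]
          exact ⟨w, hw, hw0⟩
        obtain ⟨d, hd⟩ := wt_rep D hsimple hV hνwt
        obtain ⟨p, hp1, hp2⟩ := factB D hsimple hV hd hw hw0 hfw
        have hmp : m = -(p : ℤ) := by
          have : ((m : ℤ) : ℂ) = ((-(p:ℤ) : ℤ) : ℂ) := by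
            push_cast
            rw [← hm, hp1]
          exact_mod_cast this
        have : (-m).toNat = p := by omega
        rw [this]
        exact hp2
      · set w' := ⁅D.f i, w⁆ with hw'
        have hw'wt : w' ∈ wtSpace D.H V (ν - D.α i) := wt_lie_f D hw i
        have hw'nil : fpow D i n0 w' = 0 := by
          rw [hw', ← fpow_succ']
          exact hnil
        have heig : (ν - D.α i) (D.coroot i) = ((m - 2 : ℤ) : ℂ) := by
          rw [LinearMap.sub_apply, hm, alpha_coroot_self]
          push_cast
          ring
        have hIH := ih (ν - D.α i) w' hw'wt hfw hw'nil (m - 2) heig (by omega)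
        -- suppose the e-string of w dies early
        by_contra hcon
        apply hIH
        set P := (-m).toNat with hP'
        have h2m : (-(m - 2)).toNat = P + 2 := by omega
        have hPz : epow D i P w = 0 := hcon
        have hP1 : epow D i (P+1) w = 0 := epow_eq_zero_mono D i (by omega) hPz
        have hP2 : epow D i (P+2) w = 0 := epow_eq_zero_mono D i (by omega) hPz
        have hid := lie_f_epow D hw i (P+1)
        rw [show P + 1 + 1 = P + 2 from rfl, hP2, lie_zero, hP1, smul_zero, sub_zero] at hid
        rw [h2m, hw']
        exact hid.symm

end Dev7
section Dev8
set_option linter.unusedSectionVars false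
set_option maxHeartbeats 1000000
variable {𝓘 : Type} [Fintype 𝓘] [DecidableEq 𝓘] {g : Type} [LieRing g] [LieAlgebra ℂ g]
variable {V : Type} [AddCommGroup V] [Module ℂ V] [LieRingModule g V] [LieModule ℂ g V]
variable (D : Data 𝓘 g)

lemma exists_raise (hsimple : ∀ N : LieSubmodule ℂ g V, N = ⊥ ∨ N = ⊤)
    {lam : Module.Dual ℂ D.H} {v : V} (hV : IsHW D V lam v)
    {ν : Module.Dual ℂ D.H} (hν : ν ∈ wtSet D.H V) (hne : ν ≠ lam) :
    ∃ (i : 𝓘) (w : V), w ∈ wtSpace D.H V ν ∧ w ≠ 0 ∧ ⁅D.e i, w⁆ ≠ 0 := by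
  classical
  obtain ⟨u, hu, hu0⟩ := (Submodule.ne_bot_iff _).mp hν
  by_cases hek : ∀ j, ⁅D.e j, u⁆ = 0
  · exfalso
    apply hne
    obtain ⟨d, hd⟩ := wt_rep D hsimple hV hν
    have hlamwt : lam ∈ wtSet D.H V := by
      rw [wtSet, Set.mem_setOf_eq, Submodule.ne_bot_iff]
      exact ⟨v, hV.2.1, hV.1⟩
    obtain ⟨d', hd'⟩ := wt_below D hsimple hu hu0 hek hlamwt
    -- lam = ν - ∑ d' α and ν = lam - ∑ d α
    rw [hd, sub_sub, eq_sub_iff_add_eq] at hd'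
    have h0 := add_eq_left.mp hd'
    have hsplit : ∑ i0, ((d i0 : ℂ) + (d' i0 : ℂ)) • D.α i0 = 0 := by
      simp only [add_smul, Finset.sum_add_distrib]
      exact h0
    have hco := Fintype.linearIndependent_iff.mp D.indepSimple
      (fun i0 => (d i0 : ℂ) + (d' i0 : ℂ)) hsplit
    have hz : ∀ i0, d i0 = 0 := by
      intro i0
      have := hco i0
      have hnat : ((d i0 + d' i0 : ℕ) : ℂ) = ((0:ℕ) : ℂ) := by push_cast; linear_combination this
      have := Nat.cast_injective (R := ℂ) hnat
      omega
    rw [hd]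
    simp [hz]
  · push_neg at hek
    obtain ⟨j, hj⟩ := hek
    exact ⟨j, u, hu, hu0, hj⟩

lemma chain_step (hsimple : ∀ N : LieSubmodule ℂ g V, N = ⊥ ∨ N = ⊤)
    {lam : Module.Dual ℂ D.H} {v : V} (hV : IsHW D V lam v)
    (hP : ∀ i : 𝓘, ∃ k : ℕ, lam (D.coroot i) = (k : ℂ))
    {ν : Module.Dual ℂ D.H} (hν : ν ∈ wtSet D.H V) (hne : ν ≠ lam)
    {d : 𝓘 → ℕ} (hd : ν = lam - ∑ i0, (d i0 : ℂ) • D.α i0) :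
    ∃ (i : 𝓘) (p q : ℕ) (d' : 𝓘 → ℕ),
      1 ≤ p ∧ p ≤ q ∧
      (ν + (p:ℂ) • D.α i) ∈ wtSet D.H V ∧
      (ν + (p:ℂ) • D.α i) = lam - ∑ i0, (d' i0 : ℂ) • D.α i0 ∧
      (∀ l, d l = d' l + (if l = i then p else 0)) ∧
      (ν + (p:ℂ) • D.α i) (D.coroot i) = (q : ℂ) ∧
      (∀ j : ℕ, j ≤ q → (ν + (p:ℂ) • D.α i) - (j:ℂ) • D.α i ∈ wtSet D.H V) := by
  classical
  obtain ⟨i, w, hw, hw0, hew⟩ := exists_raise D hsimple hV hν hne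
  obtain ⟨p, hp1, hp2, hpmax⟩ := exists_top D hsimple hV hd hw hw0 i
  have hp_pos : 1 ≤ p := by
    apply hpmax 1
    rw [epow_succ, epow_zero]
    exact hew
  set w' := epow D i p w with hw'
  have hw'wt : w' ∈ wtSpace D.H V (ν + (p:ℂ) • D.α i) := wt_epow D hw i p
  have hw'e : ⁅D.e i, w'⁆ = 0 := by
    rw [hw', ← epow_succ]
    exact hp2
  obtain ⟨q, heig, hstr, _⟩ := factT D hsimple hV hP hw'wt hp1 hw'e
  have hν'wt : ν + (p:ℂ) • D.α i ∈ wtSet D.H V := by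
    rw [wtSet, Set.mem_setOf_eq, Submodule.ne_bot_iff]
    exact ⟨w', hw'wt, hp1⟩
  obtain ⟨d', hd'⟩ := wt_rep D hsimple hV hν'wt
  -- coefficient bookkeeping: d l = d' l + p δ_{l i}
  have h1 : lam - (∑ i0, (d i0 : ℂ) • D.α i0) + (p : ℂ) • D.α i
      = lam - ∑ i0, (d' i0 : ℂ) • D.α i0 := by
    rw [← hd]; exact hd'
  have h3 := sub_eq_zero.mpr h1
  have h4 : (∑ i0, (d' i0 : ℂ) • D.α i0) + (p : ℂ) • D.α i
      - ∑ i0, (d i0 : ℂ) • D.α i0 = 0 := by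
    rw [← h3]; abel
  have key := sub_eq_zero.mp h4
  have expand : ∑ i0, ((d' i0 : ℂ) + if i0 = i then (p : ℂ) else 0) • D.α i0
      = (∑ i0, (d' i0 : ℂ) • D.α i0) + (p : ℂ) • D.α i := by
    simp only [add_smul, Finset.sum_add_distrib, ite_smul, zero_smul, Finset.sum_ite_eq',
      Finset.mem_univ, if_true]
  have hrel : ∀ l, d l = d' l + (if l = i then p else 0) := by
    intro l
    have hco := alpha_comb_eq D (c := fun i0 => (d' i0 : ℂ) + if i0 = i then (p : ℂ) else 0)
      (c' := fun i0 => (d i0 : ℂ)) (by rw [expand, key]) l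
    by_cases hl : l = i
    · subst hl
      rw [if_pos rfl] at hco ⊢
      have : ((d' l + p : ℕ) : ℂ) = ((d l : ℕ) : ℂ) := by push_cast; linear_combination hco
      exact (Nat.cast_injective (R := ℂ) this).symm
    · rw [if_neg hl] at hco ⊢
      rw [add_zero] at hco ⊢
      have : ((d' l : ℕ) : ℂ) = ((d l : ℕ) : ℂ) := by push_cast; linear_combination hco
      exact (Nat.cast_injective (R := ℂ) this).symm
  -- p ≤ q
  obtain ⟨m, hm⟩ := eig_int D hP hd i
  have heig2 : ((q : ℤ) : ℂ) = ((m + 2 * p : ℤ) : ℂ) := by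
    have : (ν + (p:ℂ) • D.α i) (D.coroot i) = ν (D.coroot i) + (p:ℂ) * 2 := by
      rw [LinearMap.add_apply, LinearMap.smul_apply, smul_eq_mul, alpha_coroot_self]
    push_cast
    rw [← heig, this, hm]
    push_cast
    ring
  have hq_int : (q : ℤ) = m + 2 * p := Int.cast_injective (α := ℂ) heig2
  have hpq : p ≤ q := by
    by_cases hm0 : 0 ≤ m
    · omega
    · -- m < 0 : use the mirror lemma
      obtain ⟨n0, hn0⟩ := fpow_locnil D hsimple hV hP i w
      have := mirror D hsimple hV hP i n0 ν w hw hw0 hn0 m hm (by omega)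
      have hle := hpmax _ this
      omega
  refine ⟨i, p, q, d', hp_pos, hpq, hν'wt, hd', hrel, heig, ?_⟩
  intro j hj
  rw [wtSet, Set.mem_setOf_eq, Submodule.ne_bot_iff]
  refine ⟨fpow D i j w', ?_, hstr j hj⟩
  have := wt_fpow D hw'wt i j
  exact this

end Dev8
section Dev9
set_option linter.unusedSectionVars false
set_option maxHeartbeats 1000000
variable {𝓘 : Type} [Fintype 𝓘] [DecidableEq 𝓘] {g : Type} [LieRing g] [LieAlgebra ℂ g]
variable {V : Type} [AddCommGroup V] [Module ℂ V] [LieRingModule g V] [LieModule ℂ g V]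
variable (D : Data 𝓘 g)

lemma chain (hsimple : ∀ N : LieSubmodule ℂ g V, N = ⊥ ∨ N = ⊤)
    {lam : Module.Dual ℂ D.H} {v : V} (hV : IsHW D V lam v)
    (hP : ∀ i : 𝓘, ∃ k : ℕ, lam (D.coroot i) = (k : ℂ)) (i0 : 𝓘) :
    ∀ N : ℕ, ∀ (ν : Module.Dual ℂ D.H) (d : 𝓘 → ℕ), (∑ i, d i) = N →
      ν ∈ wtSet D.H V → ν = lam - ∑ i, (d i : ℂ) • D.α i →
      ∃ (n : ℕ) (μs : ℕ → Module.Dual ℂ D.H) (is : ℕ → 𝓘) (ks : ℕ → ℕ),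
        n ≤ N ∧ μs 0 = ν ∧ μs n = lam ∧
        ∀ t : ℕ, 1 ≤ t → t ≤ n →
          d (is t) ≠ 0 ∧ 0 < ks t ∧ μs t (D.coroot (is t)) = (ks t : ℂ) ∧
          (∃ j : ℕ, j ≤ ks t ∧ μs (t-1) = μs t - (j:ℂ) • D.α (is t)) ∧
          (∀ j : ℕ, j ≤ ks t → μs t - (j:ℂ) • D.α (is t) ∈ wtSet D.H V) := by
  intro N
  induction N using Nat.strong_induction_on with
  | _ N IH =>
    intro ν d hdN hν hd
    by_cases hnu : ν = lam
    · refine ⟨0, fun _ => ν, fun _ => i0, fun _ => 0, Nat.zero_le N, rfl, hnu, ?_⟩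
      intro t ht1 ht2
      omega
    · obtain ⟨i, p, q, d', hp1, hpq, hν', hd', hrel, heig, hstr⟩ :=
        chain_step D hsimple hV hP hν hnu hd
      have hsum : ∑ l, d l = (∑ l, d' l) + p := by
        rw [Finset.sum_congr rfl (fun l _ => hrel l), Finset.sum_add_distrib]
        simp
      have hlt : (∑ l, d' l) < N := by omega
      obtain ⟨n', μs', is', ks', hn', hμ0', hμn', hcond'⟩ :=
        IH (∑ l, d' l) hlt (ν + (p:ℂ) • D.α i) d' rfl hν' hd'
      refine ⟨n' + 1,
        (fun t => if t = 0 then ν else μs' (t-1)),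
        (fun t => if t ≤ 1 then i else is' (t-1)),
        (fun t => if t ≤ 1 then q else ks' (t-1)), by omega, if_pos rfl, ?_, ?_⟩
      · beta_reduce
        rw [if_neg (Nat.succ_ne_zero n')]
        simpa using hμn'
      · intro t ht1 ht2
        beta_reduce
        by_cases ht : t = 1
        · subst ht
          rw [if_pos le_rfl, if_pos le_rfl, if_neg one_ne_zero]
          have hμ1 : μs' (1-1) = ν + (p:ℂ) • D.α i := hμ0'
          rw [hμ1]
          refine ⟨?_, by omega, heig, ⟨p, hpq, ?_⟩, hstr⟩
          · have := hrel i
            rw [if_pos rfl] at this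
            omega
          · show (if (1:ℕ) - 1 = 0 then ν else μs' (1 - 1 - 1)) = _
            norm_num
        · have ht2' : 2 ≤ t := by omega
          rw [if_neg (by omega : ¬ t ≤ 1), if_neg (by omega : ¬ t ≤ 1),
            if_neg (by omega : ¬ t = 0)]
          obtain ⟨hd'0, hks0, heig0, ⟨j, hj1, hj2⟩, hstr0⟩ :=
            hcond' (t-1) (by omega) (by omega)
          refine ⟨?_, hks0, heig0, ⟨j, hj1, ?_⟩, hstr0⟩
          · have := hrel (is' (t-1))
            intro hcon
            rw [hcon] at this
            omega
          · rw [if_neg (by omega : ¬ t - 1 = 0)]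
            exact hj2
end Dev9
/-- Lemma 6.1: for `λ ∈ P⁺` and `λ ≠ μ ∈ wt L(λ)` (here `V` is the
simple highest weight module `L(λ)`), there is a chain of weights
`μ = μ_0 ≼ μ_1 ≼ ⋯ ≼ μ_n = λ` and nodes `i_t ∈ supp(λ−μ)`, `n ≤ ht(λ−μ)`, with
`⟨μ_t, α_{i_t}^∨⟩ ∈ ℤ>0` and `μ_{t−1} ∈ [s_{i_t}(μ_t), μ_t] ⊆ wt L(λ)` for all `t`. -/
theorem integrable_chain_to_highest_weight
    {𝓘 : Type} [Fintype 𝓘] [DecidableEq 𝓘] {g : Type} [LieRing g] [LieAlgebra ℂ g]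
    (D : Data 𝓘 g)
    (V : Type) [AddCommGroup V] [Module ℂ V] [LieRingModule g V] [LieModule ℂ g V]
    (lam : Module.Dual ℂ D.H) (v : V) (hV : IsHW D V lam v)
    (hsimple : ∀ N : LieSubmodule ℂ g V, N = ⊥ ∨ N = ⊤)
    (hP : ∀ i : 𝓘, ∃ k : ℕ, lam (D.coroot i) = (k : ℂ))
    (μ : Module.Dual ℂ D.H) (hμ : μ ∈ wtSet D.H V) (hne : μ ≠ lam)
    (c : 𝓘 → ℕ) (hc : lam - μ = ∑ i, (c i : ℂ) • D.α i) :
    ∃ (n : ℕ) (μs : ℕ → Module.Dual ℂ D.H) (is : ℕ → 𝓘) (ks : ℕ → ℕ),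
      n ≤ ∑ i, c i ∧ μs 0 = μ ∧ μs n = lam ∧
        ∀ t : ℕ, 1 ≤ t → t ≤ n →
          c (is t) ≠ 0 ∧ 0 < ks t ∧ μs t (D.coroot (is t)) = (ks t : ℂ) ∧
            (∃ j : ℕ, j ≤ ks t ∧ μs (t - 1) = μs t - (j : ℂ) • D.α (is t)) ∧
            (∀ j : ℕ, j ≤ ks t → μs t - (j : ℂ) • D.α (is t) ∈ wtSet D.H V) := by
  classical
  have hi0 : Nonempty 𝓘 := by
    by_contra hempty
    apply hne
    haveI : IsEmpty 𝓘 := not_nonempty_iff.mp hempty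
    have hz : lam - μ = 0 := by rw [hc, Finset.univ_eq_empty, Finset.sum_empty]
    exact (sub_eq_zero.mp hz).symm
  obtain ⟨i0⟩ := hi0
  have hμrep : μ = lam - ∑ i, (c i : ℂ) • D.α i := by
    rw [← hc]
    exact (sub_sub_cancel lam μ).symm
  obtain ⟨n, μs, is, ks, h1, h2, h3, h4⟩ :=
    chain D hsimple hV hP i0 (∑ i, c i) μ c rfl hμ hμrep
  exact ⟨n, μs, is, ks, h1, h2, h3, h4⟩

end KM
end

section
/- Let λ ∈ 𝔥* and let V be a highest weight 𝔤-module with highest weight λ. Let H_1, …, H_s be pairwise distinct independent subsets of J_λ (the empty set allowed) such that the weight w_{H_t} • λ := λ − Σ_{i∈H_t}(λ(α_i^∨)+1)α_i lies in wt V for every 1 ≤ t ≤ s. Then for every μ ∈ 𝔥*: dim V_μ ≥ Σ_{t=1}^{s} dim L(w_{H_t} • λ)_μ. -/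
open scoped BigOperators

attribute [local instance] Classical.propDecidable

namespace KM

variable {g : Type} [LieRing g] [LieAlgebra ℂ g]

variable {𝓘 : Type}

set_option linter.unusedSectionVars false

section Aux

variable {𝓘 : Type} {g : Type} [LieRing g] [LieAlgebra ℂ g]

variable (D : Data 𝓘 g) {W : Type} [AddCommGroup W] [Module ℂ W] [LieRingModule g W]
  [LieModule ℂ g W]

lemma mem_wt {μ : Module.Dual ℂ D.H} {w : W} :
    w ∈ wtSpace D.H W μ ↔ ∀ h : D.H, ⁅(h : g), w⁆ = μ h • w := Iff.rfl

lemma wt_disjoint {μ ν : Module.Dual ℂ D.H} {w : W} (hμ : w ∈ wtSpace D.H W μ)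
    (hν : w ∈ wtSpace D.H W ν) (hne : μ ≠ ν) : w = 0 := by
  obtain ⟨h, hh⟩ : ∃ h : D.H, μ h ≠ ν h := by
    by_contra hc
    push_neg at hc
    exact hne (LinearMap.ext hc)
  have := (mem_wt D).1 hμ h
  rw [(mem_wt D).1 hν h] at this
  have h2 : (μ h - ν h) • w = 0 := by
    rw [sub_smul, this, sub_self]
  rcases smul_eq_zero.1 h2 with h3 | h3
  · exact absurd (sub_eq_zero.1 h3) hh
  · exact h3

lemma lie_f_wt {μ : Module.Dual ℂ D.H} {w : W} (hw : w ∈ wtSpace D.H W μ) (i : 𝓘) :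
    ⁅D.f i, w⁆ ∈ wtSpace D.H W (μ - D.α i) := by
  intro h
  have : ⁅(h : g), ⁅D.f i, w⁆⁆ = ⁅⁅(h : g), D.f i⁆, w⁆ + ⁅D.f i, ⁅(h : g), w⁆⁆ :=
    leibniz_lie _ _ _
  rw [this, D.lie_h_f h i, hw h]
  simp only [neg_lie, neg_smul, smul_lie, lie_smul, LinearMap.sub_apply, sub_smul]
  abel

/-- Iterated application of `f`'s along a list. -/
def opL (l : List 𝓘) (w : W) : W := l.foldr (fun i x => ⁅D.f i, x⁆) w

@[simp] lemma opL_nil (w : W) : opL D ([] : List 𝓘) w = w := rfl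

@[simp] lemma opL_cons (i : 𝓘) (l : List 𝓘) (w : W) :
    opL D (i :: l) w = ⁅D.f i, opL D l w⁆ := rfl

lemma opL_append (l l' : List 𝓘) (w : W) :
    opL D (l ++ l') w = opL D l (opL D l' w) := by
  induction l with
  | nil => rfl
  | cons i l ih => simp [ih]

end Aux
section Aux2

variable {𝓘 : Type} {g : Type} [LieRing g] [LieAlgebra ℂ g]

variable (D : Data 𝓘 g) {W : Type} [AddCommGroup W] [Module ℂ W] [LieRingModule g W]
  [LieModule ℂ g W]

variable [Fintype 𝓘] [DecidableEq 𝓘]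

/-- The sum of simple roots counted with multiplicity in a list. -/
noncomputable def lsum (l : List 𝓘) : Module.Dual ℂ D.H := (l.map D.α).sum

@[simp] lemma lsum_nil : lsum D ([] : List 𝓘) = 0 := rfl

@[simp] lemma lsum_cons (i : 𝓘) (l : List 𝓘) : lsum D (i :: l) = D.α i + lsum D l := by
  simp [lsum]

lemma lsum_eq_count (l : List 𝓘) : lsum D l = ∑ i : 𝓘, (l.count i : ℂ) • D.α i := by
  induction l with
  | nil => simp
  | cons i l ih =>
    rw [lsum_cons, ih]
    have h : ∀ j : 𝓘, (((i :: l).count j : ℕ) : ℂ) • D.α j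
        = ((if j = i then (1:ℂ) else 0) • D.α j) + ((l.count j : ℂ)) • D.α j := by
      intro j
      rw [List.count_cons]
      by_cases hji : j = i
      · subst hji; simp [add_smul, add_comm]
      · have : (i == j) = false := by simpa using Ne.symm hji
        simp [this, hji]
    rw [Finset.sum_congr rfl (fun j _ => h j), Finset.sum_add_distrib]
    congr 1
    have h2 : ∑ x : 𝓘, (if x = i then (1:ℂ) else 0) • D.α x = D.α i := by
      simp [ite_smul]
    exact h2.symm

lemma opL_wt {μ : Module.Dual ℂ D.H} {w : W} (hw : w ∈ wtSpace D.H W μ) (l : List 𝓘) :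
    opL D l w ∈ wtSpace D.H W (μ - lsum D l) := by
  induction l with
  | nil => simpa using hw
  | cons i l ih =>
    have h2 := lie_f_wt D ih i
    rw [opL_cons]
    have : μ - lsum D (i :: l) = μ - lsum D l - D.α i := by
      rw [lsum_cons]; abel
    rw [this]
    exact h2

lemma wt_indep (s : Finset (Module.Dual ℂ D.H)) (w : Module.Dual ℂ D.H → W)
    (hw : ∀ κ ∈ s, w κ ∈ wtSpace D.H W κ) (hsum : ∑ κ ∈ s, w κ = 0) :
    ∀ κ ∈ s, w κ = 0 := by
  intro κ0 hκ0
  have hsep : ∀ ν : Module.Dual ℂ D.H, ν ≠ κ0 → ∃ h : D.H, κ0 h ≠ ν h := by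
    intro ν hν
    by_contra hc; push_neg at hc
    exact hν (LinearMap.ext fun h => (hc h).symm)
  let hp : Module.Dual ℂ D.H → D.H := fun ν =>
    if hc : ∃ h : D.H, κ0 h ≠ ν h then hc.choose else 0
  have hp_spec : ∀ ν, ν ≠ κ0 → κ0 (hp ν) ≠ ν (hp ν) := by
    intro ν hν
    have hc : ∃ h : D.H, κ0 h ≠ ν h := hsep ν hν
    simp only [hp, dif_pos hc]
    exact hc.choose_spec
  let F : Module.Dual ℂ D.H → W → W := fun ν y => ⁅((hp ν : D.H) : g), y⁆ - ν (hp ν) • y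
  have h_add : ∀ (L : List (Module.Dual ℂ D.H)) (x y : W),
      L.foldr F (x + y) = L.foldr F x + L.foldr F y := by
    intro L x y
    induction L with
    | nil => rfl
    | cons ν L ih =>
      simp only [List.foldr_cons, ih, F, lie_add, smul_add]
      abel
  have h_wt : ∀ (L : List (Module.Dual ℂ D.H)) (κ : Module.Dual ℂ D.H) (x : W),
      x ∈ wtSpace D.H W κ →
      L.foldr F x = (L.map (fun ν => κ (hp ν) - ν (hp ν))).prod • x := by
    intro L κ x hx
    induction L with
    | nil => simp
    | cons ν L ih =>
      simp only [List.foldr_cons, ih, List.map_cons, List.prod_cons, F]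
      rw [lie_smul, (mem_wt D).1 hx (hp ν), smul_smul, smul_smul, ← sub_smul]
      congr 1
      ring
  set L : List (Module.Dual ℂ D.H) := (s.erase κ0).toList with hLdef
  let φ : W →+ W := AddMonoidHom.mk' (fun x => L.foldr F x) (h_add L)
  have key : ∑ κ ∈ s, (L.map (fun ν => κ (hp ν) - ν (hp ν))).prod • w κ = 0 := by
    have h1 : φ (∑ κ ∈ s, w κ) = ∑ κ ∈ s, φ (w κ) := map_sum φ w s
    rw [hsum, map_zero] at h1
    have h2 : ∀ κ ∈ s, φ (w κ) = (L.map (fun ν => κ (hp ν) - ν (hp ν))).prod • w κ := by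
      intro κ hκ
      exact h_wt L κ (w κ) (hw κ hκ)
    rw [Finset.sum_congr rfl h2] at h1
    exact h1.symm
  have hz : ∀ κ ∈ s.erase κ0, (L.map (fun ν => κ (hp ν) - ν (hp ν))).prod • w κ = 0 := by
    intro κ hκ
    have : (0:ℂ) ∈ L.map (fun ν => κ (hp ν) - ν (hp ν)) :=
      List.mem_map.2 ⟨κ, by rw [hLdef]; exact Finset.mem_toList.2 hκ, by rw [sub_self]⟩
    rw [List.prod_eq_zero this, zero_smul]
  rw [← Finset.sum_erase_add s _ hκ0, Finset.sum_congr rfl hz, Finset.sum_const_zero,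
    zero_add] at key
  have hc0 : (L.map (fun ν => κ0 (hp ν) - ν (hp ν))).prod ≠ 0 := by
    apply List.prod_ne_zero
    intro hmem
    obtain ⟨ν, hν, heq⟩ := List.mem_map.1 hmem
    have hν' : ν ∈ s.erase κ0 := by rwa [hLdef, Finset.mem_toList] at hν
    exact hp_spec ν (Finset.ne_of_mem_erase hν') (sub_eq_zero.1 heq)
  rcases smul_eq_zero.1 key with h | h
  · exact absurd h hc0
  · exact h

end Aux2
section Aux3

variable {𝓘 : Type} {g : Type} [LieRing g] [LieAlgebra ℂ g]

variable (D : Data 𝓘 g) {W : Type} [AddCommGroup W] [Module ℂ W] [LieRingModule g W]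
  [LieModule ℂ g W]

variable [Fintype 𝓘] [DecidableEq 𝓘]

lemma wt_extract (s : Finset (Module.Dual ℂ D.H)) (w : Module.Dual ℂ D.H → W)
    (hw : ∀ ν ∈ s, w ν ∈ wtSpace D.H W ν) {μ : Module.Dual ℂ D.H} {x : W}
    (hx : x ∈ wtSpace D.H W μ) (hsum : ∑ ν ∈ s, w ν = x) :
    (∀ ν ∈ s, ν ≠ μ → w ν = 0) ∧ (μ ∈ s → w μ = x) ∧ (μ ∉ s → x = 0) := by
  by_cases hμ : μ ∈ s
  · let w' : Module.Dual ℂ D.H → W := fun ν => if ν = μ then w ν - x else w ν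
    have hw' : ∀ ν ∈ s, w' ν ∈ wtSpace D.H W ν := by
      intro ν hν
      by_cases h : ν = μ
      · subst h; simpa [w'] using Submodule.sub_mem _ (hw ν hν) hx
      · simpa [w', h] using hw ν hν
    have hsum' : ∑ ν ∈ s, w' ν = 0 := by
      have he : ∀ ν ∈ s, w' ν = w ν + (if ν = μ then -x else 0) := by
        intro ν hν
        by_cases h : ν = μ <;> simp [w', h, sub_eq_add_neg]
      rw [Finset.sum_congr rfl he, Finset.sum_add_distrib, hsum,
        Finset.sum_ite_eq' s μ (fun _ => -x), if_pos hμ, add_neg_cancel]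
    have hind := wt_indep D s w' hw' hsum'
    refine ⟨fun ν hν hne => ?_, fun _ => ?_, fun h => absurd hμ h⟩
    · simpa [w', hne] using hind ν hν
    · have := hind μ hμ
      simp only [w', if_pos rfl] at this
      exact sub_eq_zero.1 this
  · let w' : Module.Dual ℂ D.H → W := fun ν => if ν = μ then -x else w ν
    have hw' : ∀ ν ∈ insert μ s, w' ν ∈ wtSpace D.H W ν := by
      intro ν hν
      rcases Finset.mem_insert.1 hν with h | h
      · subst h; simpa [w'] using Submodule.neg_mem _ hx
      · have hne : ν ≠ μ := fun he => hμ (he ▸ h)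
        simpa [w', hne] using hw ν h
    have hsum' : ∑ ν ∈ insert μ s, w' ν = 0 := by
      rw [Finset.sum_insert hμ]
      have he : ∀ ν ∈ s, w' ν = w ν := by
        intro ν hν
        have hne : ν ≠ μ := fun hee => hμ (hee ▸ hν)
        simp [w', hne]
      rw [Finset.sum_congr rfl he, hsum]
      simp [w']
    have hind := wt_indep D (insert μ s) w' hw' hsum'
    have hx0 : x = 0 := by
      have := hind μ (Finset.mem_insert_self μ s)
      simp only [w', if_pos rfl, neg_eq_zero] at this
      exact this
    refine ⟨fun ν hν _ => ?_, fun h => absurd h hμ, fun _ => hx0⟩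
    have hne : ν ≠ μ := fun hee => hμ (hee ▸ hν)
    simpa [w', hne] using hind ν (Finset.mem_insert_of_mem hν)

lemma span_decomp (G : Set W) (hG : ∀ x ∈ G, ∃ κ, x ∈ wtSpace D.H W κ) {x : W}
    (hx : x ∈ Submodule.span ℂ G) :
    ∃ (s : Finset (Module.Dual ℂ D.H)) (w : Module.Dual ℂ D.H → W),
      (∀ ν ∈ s, w ν ∈ Submodule.span ℂ (G ∩ (wtSpace D.H W ν : Set W))
        ⊓ wtSpace D.H W ν) ∧ ∑ ν ∈ s, w ν = x := by
  obtain ⟨c, hsupp, hsum⟩ := Submodule.mem_span_set.1 hx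
  let κf : W → Module.Dual ℂ D.H := fun y =>
    if h : ∃ κ, y ∈ wtSpace D.H W κ then h.choose else 0
  have κf_spec : ∀ y ∈ G, y ∈ wtSpace D.H W (κf y) := by
    intro y hy
    have h := hG y hy
    simp only [κf, dif_pos h]
    exact h.choose_spec
  refine ⟨c.support.image κf,
    fun ν => ∑ y ∈ c.support.filter (fun y => κf y = ν), c y • y, ?_, ?_⟩
  · intro ν hν
    refine Submodule.mem_inf.2 ⟨?_, ?_⟩ <;>
      refine Submodule.sum_mem _ (fun y hy => ?_)
    · obtain ⟨hy1, hy2⟩ := Finset.mem_filter.1 hy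
      have hyG : y ∈ G := hsupp hy1
      exact Submodule.smul_mem _ _ (Submodule.subset_span ⟨hyG, hy2 ▸ κf_spec y hyG⟩)
    · obtain ⟨hy1, hy2⟩ := Finset.mem_filter.1 hy
      exact Submodule.smul_mem _ _ (hy2 ▸ κf_spec y (hsupp hy1))
  · rw [Finset.sum_fiberwise_of_maps_to (fun y hy => Finset.mem_image_of_mem κf hy)]
    rw [← hsum, Finsupp.sum]

lemma span_wt (G : Set W) (hG : ∀ x ∈ G, ∃ κ, x ∈ wtSpace D.H W κ)
    (μ : Module.Dual ℂ D.H) {x : W} (hx : x ∈ Submodule.span ℂ G)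
    (hxμ : x ∈ wtSpace D.H W μ) :
    x ∈ Submodule.span ℂ (G ∩ (wtSpace D.H W μ : Set W)) := by
  obtain ⟨s, w, hw, hsum⟩ := span_decomp D G hG hx
  obtain ⟨h1, h2, h3⟩ := wt_extract D s w (fun ν hν => (Submodule.mem_inf.1 (hw ν hν)).2)
    hxμ hsum
  by_cases hμ : μ ∈ s
  · rw [← h2 hμ]
    exact (Submodule.mem_inf.1 (hw μ hμ)).1
  · rw [h3 hμ]
    exact Submodule.zero_mem _

end Aux3
section Aux4

variable {𝓘 : Type} {g : Type} [LieRing g] [LieAlgebra ℂ g]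

variable (D : Data 𝓘 g) {W : Type} [AddCommGroup W] [Module ℂ W] [LieRingModule g W]
  [LieModule ℂ g W]

variable [Fintype 𝓘] [DecidableEq 𝓘]

/-- The span of all `f`-monomials applied to `u`. -/
noncomputable def monSpan (u : W) : Submodule ℂ W :=
  Submodule.span ℂ (Set.range fun l : List 𝓘 => opL D l u)

lemma self_mem_monSpan (u : W) : u ∈ monSpan D u :=
  Submodule.subset_span ⟨[], rfl⟩

lemma opL_mem_monSpan (u : W) (l : List 𝓘) : opL D l u ∈ monSpan D u :=
  Submodule.subset_span ⟨l, rfl⟩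

lemma monSpan_lie_stable {κ : Module.Dual ℂ D.H} {u : W} (hu : u ∈ wtSpace D.H W κ)
    (he : ∀ j : 𝓘, ⁅D.e j, u⁆ = 0) :
    ∀ x : g, ∀ w ∈ monSpan D u, ⁅x, w⁆ ∈ monSpan D u := by
  have hgen : ∀ x : g, (∀ l : List 𝓘, ⁅x, opL D l u⁆ ∈ monSpan D u) →
      ∀ w ∈ monSpan D u, ⁅x, w⁆ ∈ monSpan D u := by
    intro x hx w hw
    refine Submodule.span_induction ?_ ?_ ?_ ?_ hw
    · rintro y ⟨l, rfl⟩
      exact hx l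
    · rw [lie_zero]; exact Submodule.zero_mem _
    · intro a b _ _ ha hb
      rw [lie_add]; exact Submodule.add_mem _ ha hb
    · intro c a _ ha
      rw [lie_smul]; exact Submodule.smul_mem _ _ ha
  have hH : ∀ x : g, x ∈ D.H → ∀ w ∈ monSpan D u, ⁅x, w⁆ ∈ monSpan D u := by
    intro x hx
    refine hgen x (fun l => ?_)
    have := (mem_wt D).1 (opL_wt D hu l) ⟨x, hx⟩
    rw [this]
    exact Submodule.smul_mem _ _ (opL_mem_monSpan D u l)
  have hf : ∀ i : 𝓘, ∀ w ∈ monSpan D u, ⁅D.f i, w⁆ ∈ monSpan D u := by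
    intro i
    refine hgen _ (fun l => ?_)
    exact opL_mem_monSpan D u (i :: l)
  have he' : ∀ i : 𝓘, ∀ w ∈ monSpan D u, ⁅D.e i, w⁆ ∈ monSpan D u := by
    intro i
    refine hgen _ (fun l => ?_)
    induction l with
    | nil => rw [opL_nil, he i]; exact Submodule.zero_mem _
    | cons j l ih =>
      rw [opL_cons, leibniz_lie]
      refine Submodule.add_mem _ ?_ (hf j _ ih)
      by_cases hij : i = j
      · subst hij
        rw [D.lie_e_f_same i]
        exact hH _ (D.coroot i).2 _ (opL_mem_monSpan D u l)
      · rw [D.lie_e_f_ne i j hij, zero_lie]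
        exact Submodule.zero_mem _
  -- stabilizer subalgebra
  let A : LieSubalgebra ℂ g :=
    { carrier := {x : g | ∀ w ∈ monSpan D u, ⁅x, w⁆ ∈ monSpan D u}
      add_mem' := by
        intro a b ha hb w hw
        rw [add_lie]
        exact Submodule.add_mem _ (ha w hw) (hb w hw)
      zero_mem' := by
        intro w hw
        rw [zero_lie]
        exact Submodule.zero_mem _
      smul_mem' := by
        intro c a ha w hw
        rw [smul_lie]
        exact Submodule.smul_mem _ _ (ha w hw)
      lie_mem' := by
        intro a b ha hb w hw
        rw [lie_lie]
        exact Submodule.sub_mem _ (ha _ (hb w hw)) (hb _ (ha w hw)) }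
  have hsub : (D.H : Set g) ∪ Set.range D.e ∪ Set.range D.f ⊆ (A : Set g) := by
    rintro x ((hx | ⟨i, rfl⟩) | ⟨i, rfl⟩)
    · exact hH x hx
    · show ∀ w ∈ monSpan D u, ⁅D.e i, w⁆ ∈ monSpan D u
      exact he' i
    · show ∀ w ∈ monSpan D u, ⁅D.f i, w⁆ ∈ monSpan D u
      exact hf i
  have htop : LieSubalgebra.lieSpan ℂ g ((D.H : Set g) ∪ Set.range D.e ∪ Set.range D.f)
      ≤ A := LieSubalgebra.lieSpan_le.2 hsub
  rw [D.generates] at htop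
  exact fun x => htop (LieSubalgebra.mem_top x)

/-- The Lie submodule generated by a maximal weight vector, as an explicit monomial span. -/
noncomputable def monLS {κ : Module.Dual ℂ D.H} {u : W} (hu : u ∈ wtSpace D.H W κ)
    (he : ∀ j : 𝓘, ⁅D.e j, u⁆ = 0) : LieSubmodule ℂ g W :=
  LieSubmodule.mk (monSpan D u) (fun {x} {m} hm => monSpan_lie_stable D hu he x m hm)

@[simp] lemma monLS_coe {κ : Module.Dual ℂ D.H} {u : W} (hu : u ∈ wtSpace D.H W κ)
    (he : ∀ j : 𝓘, ⁅D.e j, u⁆ = 0) :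
    ((monLS D hu he : LieSubmodule ℂ g W) : Submodule ℂ W) = monSpan D u := rfl

lemma opL_mem_lieSubmodule (N : LieSubmodule ℂ g W) {u : W} (hu : u ∈ N) (l : List 𝓘) :
    opL D l u ∈ N := by
  induction l with
  | nil => exact hu
  | cons i l ih => exact N.lie_mem ih

lemma lieSpan_eq_monLS {κ : Module.Dual ℂ D.H} {u : W} (hu : u ∈ wtSpace D.H W κ)
    (he : ∀ j : 𝓘, ⁅D.e j, u⁆ = 0) :
    LieSubmodule.lieSpan ℂ g {u} = monLS D hu he := by
  refine le_antisymm (LieSubmodule.lieSpan_le.2 ?_) ?_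
  · intro x hx
    rw [Set.mem_singleton_iff] at hx
    rw [hx]
    show u ∈ monSpan D u
    exact self_mem_monSpan D u
  · have hu' : u ∈ LieSubmodule.lieSpan ℂ g {u} :=
      LieSubmodule.subset_lieSpan (Set.mem_singleton u)
    have hle : monSpan D u ≤ (LieSubmodule.lieSpan ℂ g {u} : LieSubmodule ℂ g W).toSubmodule := by
      refine Submodule.span_le.2 ?_
      rintro y ⟨l, rfl⟩
      exact opL_mem_lieSubmodule D _ hu' l
    exact fun x hx => hle hx

lemma lsum_replicate (n : ℕ) (j : 𝓘) :
    lsum D (List.replicate n j) = (n : ℂ) • D.α j := by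
  induction n with
  | zero => simp
  | succ n ih =>
    rw [List.replicate_succ, lsum_cons, ih]
    push_cast
    rw [add_smul, one_smul]
    abel

lemma f_comm {i j : 𝓘} (hij : i ≠ j) (hind : D.α i (D.coroot j) = 0) :
    ⁅D.f i, D.f j⁆ = 0 := by
  have hAji : D.A j i = 0 := by
    have := D.pairing_eq i j
    rw [hind] at this
    exact_mod_cast this.symm
  have hAij : D.A i j = 0 := (D.A_zero_iff i j).2 hAji
  have hs := D.serre_f i j hij
  rw [hAij] at hs
  norm_num at hs
  exact hs

lemma opL_swap (a b : 𝓘) (hc : ⁅D.f a, D.f b⁆ = 0) (l : List 𝓘) (w : W) :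
    opL D (a :: b :: l) w = opL D (b :: a :: l) w := by
  simp only [opL_cons]
  rw [leibniz_lie, hc, zero_lie, zero_add]

lemma opL_perm {l l' : List 𝓘} (hp : l.Perm l')
    (hcomm : ∀ a ∈ l, ∀ b ∈ l, ⁅D.f a, D.f b⁆ = 0) (w : W) :
    opL D l w = opL D l' w := by
  induction hp with
  | nil => rfl
  | cons x h ih =>
    rename_i l₁ l₂
    rw [opL_cons, opL_cons, ih (fun a ha b hb =>
      hcomm a (List.mem_cons_of_mem x ha) b (List.mem_cons_of_mem x hb))]
  | swap x y l =>
    exact opL_swap D y x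
      (hcomm y (by simp) x (by simp)) l w
  | trans h₁ h₂ ih₁ ih₂ =>
    rw [ih₁ hcomm, ih₂ (fun a ha b hb =>
      hcomm a (h₁.mem_iff.2 ha) b (h₁.mem_iff.2 hb))]

lemma e_opL_replicate (j : 𝓘) {κ : Module.Dual ℂ D.H} {w : W}
    (hw : w ∈ wtSpace D.H W κ) (hew : ⁅D.e j, w⁆ = 0) (n : ℕ) :
    ⁅D.e j, opL D (List.replicate (n+1) j) w⁆
      = ((n+1 : ℂ) * κ (D.coroot j) - (n+1) * n) • opL D (List.replicate n j) w := by
  induction n with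
  | zero =>
    rw [List.replicate_succ, List.replicate_zero, opL_cons, opL_nil, leibniz_lie,
      D.lie_e_f_same j, hew, lie_zero, add_zero, (mem_wt D).1 hw (D.coroot j)]
    norm_num
  | succ n ih =>
    rw [List.replicate_succ, opL_cons, leibniz_lie, D.lie_e_f_same j, ih]
    have hwt := opL_wt D hw (List.replicate (n+1) j)
    rw [(mem_wt D).1 hwt (D.coroot j), lie_smul]
    have heq : ⁅D.f j, opL D (List.replicate n j) w⁆ = opL D (List.replicate (n+1) j) w := by
      rw [List.replicate_succ, opL_cons]
    rw [heq, lsum_replicate]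
    simp only [LinearMap.sub_apply, LinearMap.smul_apply, smul_eq_mul]
    rw [D.pairing_eq j j, D.A_diag j, ← add_smul]
    congr 1
    push_cast
    ring

end Aux4
section Aux5

variable {𝓘 : Type} {g : Type} [LieRing g] [LieAlgebra ℂ g]

section ProdInst

variable {P Q : Type} [AddCommGroup P] [Module ℂ P] [LieRingModule g P] [LieModule ℂ g P]
  [AddCommGroup Q] [Module ℂ Q] [LieRingModule g Q] [LieModule ℂ g Q]

instance prodLieRingModule : LieRingModule g (P × Q) where
  bracket x m := (⁅x, m.1⁆, ⁅x, m.2⁆)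
  add_lie x y m := by
    show (⁅x + y, m.1⁆, ⁅x + y, m.2⁆) = (⁅x, m.1⁆ + ⁅y, m.1⁆, ⁅x, m.2⁆ + ⁅y, m.2⁆)
    rw [add_lie, add_lie]
  lie_add x m n := by
    show (⁅x, m.1 + n.1⁆, ⁅x, m.2 + n.2⁆) = (⁅x, m.1⁆ + ⁅x, n.1⁆, ⁅x, m.2⁆ + ⁅x, n.2⁆)
    rw [lie_add, lie_add]
  leibniz_lie x y m := by
    show (⁅x, ⁅y, m.1⁆⁆, ⁅x, ⁅y, m.2⁆⁆)
      = (⁅⁅x, y⁆, m.1⁆ + ⁅y, ⁅x, m.1⁆⁆, ⁅⁅x, y⁆, m.2⁆ + ⁅y, ⁅x, m.2⁆⁆)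
    rw [← leibniz_lie, ← leibniz_lie]

instance prodLieModule : LieModule ℂ g (P × Q) where
  smul_lie t x m := by
    show (⁅t • x, m.1⁆, ⁅t • x, m.2⁆) = (t • ⁅x, m.1⁆, t • ⁅x, m.2⁆)
    rw [smul_lie, smul_lie]
  lie_smul t x m := by
    show (⁅x, t • m.1⁆, ⁅x, t • m.2⁆) = (t • ⁅x, m.1⁆, t • ⁅x, m.2⁆)
    rw [lie_smul, lie_smul]

lemma prod_bracket (x : g) (m : P × Q) : ⁅x, m⁆ = (⁅x, m.1⁆, ⁅x, m.2⁆) := rfl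

lemma wtSpace_prod (D : Data 𝓘 g) (μ : Module.Dual ℂ D.H) (m : P × Q) :
    m ∈ wtSpace D.H (P × Q) μ ↔ m.1 ∈ wtSpace D.H P μ ∧ m.2 ∈ wtSpace D.H Q μ := by
  constructor
  · intro hm
    constructor
    · intro h
      have h1 := (Prod.ext_iff.1 (hm h)).1
      simpa [prod_bracket] using h1
    · intro h
      have h2 := (Prod.ext_iff.1 (hm h)).2
      simpa [prod_bracket] using h2
  · rintro ⟨h1, h2⟩ h
    rw [prod_bracket]
    exact Prod.ext (by simpa using h1 h) (by simpa using h2 h)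

end ProdInst

variable (D : Data 𝓘 g) {W W' : Type} [AddCommGroup W] [Module ℂ W] [LieRingModule g W]
  [LieModule ℂ g W] [AddCommGroup W'] [Module ℂ W'] [LieRingModule g W'] [LieModule ℂ g W']

lemma opL_map (φ : W →ₗ[ℂ] W') (hφ : ∀ (x : g) (w : W), φ ⁅x, w⁆ = ⁅x, φ w⁆)
    (l : List 𝓘) (w : W) : φ (opL D l w) = opL D l (φ w) := by
  induction l with
  | nil => rfl
  | cons i l ih => rw [opL_cons, opL_cons, hφ, ih]

lemma wt_map (φ : W →ₗ[ℂ] W') (hφ : ∀ (x : g) (w : W), φ ⁅x, w⁆ = ⁅x, φ w⁆)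
    {μ : Module.Dual ℂ D.H} {w : W} (hw : w ∈ wtSpace D.H W μ) :
    φ w ∈ wtSpace D.H W' μ := by
  intro h
  rw [← hφ, (mem_wt D).1 hw h, map_smul]

lemma span_lie_stable (G : Set W)
    (hG : ∀ x : g, ∀ y ∈ G, ⁅x, y⁆ ∈ Submodule.span ℂ G) :
    ∀ x : g, ∀ w ∈ Submodule.span ℂ G, ⁅x, w⁆ ∈ Submodule.span ℂ G := by
  intro x w hw
  refine Submodule.span_induction ?_ ?_ ?_ ?_ hw
  · exact fun y hy => hG x y hy
  · rw [lie_zero]; exact Submodule.zero_mem _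
  · intro a b _ _ ha hb; rw [lie_add]; exact Submodule.add_mem _ ha hb
  · intro c a _ ha; rw [lie_smul]; exact Submodule.smul_mem _ _ ha

/-- A span which is stable under the `g`-action, as a `LieSubmodule`. -/
noncomputable def mkLS (G : Set W)
    (hG : ∀ x : g, ∀ y ∈ G, ⁅x, y⁆ ∈ Submodule.span ℂ G) : LieSubmodule ℂ g W :=
  LieSubmodule.mk (Submodule.span ℂ G) (fun {x} {m} hm => span_lie_stable G hG x m hm)

@[simp] lemma mkLS_coe (G : Set W) (hG : ∀ x : g, ∀ y ∈ G, ⁅x, y⁆ ∈ Submodule.span ℂ G) :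
    ((mkLS G hG : LieSubmodule ℂ g W) : Submodule ℂ W) = Submodule.span ℂ G := rfl

variable [Fintype 𝓘] [DecidableEq 𝓘]

lemma coeff_eq {a b : 𝓘 → ℂ} (h : ∑ i : 𝓘, a i • D.α i = ∑ i : 𝓘, b i • D.α i) : a = b := by
  have h' : ∑ i : 𝓘, (a i - b i) • D.α i = 0 := by
    simp only [sub_smul]
    rw [Finset.sum_sub_distrib, h, sub_self]
  have := Fintype.linearIndependent_iff.1 D.indepSimple (fun i => a i - b i) h'
  funext i
  exact sub_eq_zero.1 (this i)

lemma count_zero_eq_nil {l : List 𝓘} (h : ∀ i : 𝓘, l.count i = 0) : l = [] := by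
  cases l with
  | nil => rfl
  | cons a l =>
    exfalso
    have : (a :: l).count a ≠ 0 := by
      simp [List.count_cons]
    exact this (h a)

lemma length_eq_sum_count (l : List 𝓘) : l.length = ∑ i : 𝓘, l.count i := by
  induction l with
  | nil => simp
  | cons a l ih =>
    have h : ∀ j : 𝓘, (a :: l).count j = l.count j + if j = a then 1 else 0 := by
      intro j
      rw [List.count_cons]
      by_cases hja : j = a
      · subst hja; simp
      · have : (a == j) = false := by simpa using Ne.symm hja
        simp [this, hja]
    rw [Finset.sum_congr rfl (fun j _ => h j), Finset.sum_add_distrib, Finset.sum_ite_eq'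
      Finset.univ a (fun _ => 1), if_pos (Finset.mem_univ a)]
    simp [ih, add_comm]

lemma finite_fixed_count (c : 𝓘 → ℕ) : {l : List 𝓘 | ∀ i, l.count i = c i}.Finite := by
  have hsub : {l : List 𝓘 | ∀ i, l.count i = c i} ⊆ {l : List 𝓘 | l.length = ∑ i : 𝓘, c i} := by
    intro l hl
    rw [Set.mem_setOf_eq, length_eq_sum_count l]
    exact Finset.sum_congr rfl (fun i _ => hl i)
  exact (List.finite_length_eq (α := 𝓘) (∑ i : 𝓘, c i)).subset hsub

end Aux5
section Aux6

variable {𝓘 : Type} {g : Type} [LieRing g] [LieAlgebra ℂ g]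

variable (D : Data 𝓘 g) {W : Type} [AddCommGroup W] [Module ℂ W] [LieRingModule g W]
  [LieModule ℂ g W]

lemma opL_zero (l : List 𝓘) : opL D l (0 : W) = 0 := by
  induction l with
  | nil => rfl
  | cons i l ih => rw [opL_cons, ih, lie_zero]

lemma e_comm_opL (j : 𝓘) (l : List 𝓘) (hj : j ∉ l) (x : W) :
    ⁅D.e j, opL D l x⁆ = opL D l ⁅D.e j, x⁆ := by
  induction l with
  | nil => rfl
  | cons a l ih =>
    have hja : j ≠ a := fun h => hj (h ▸ List.mem_cons_self)
    have hj' : j ∉ l := fun h => hj (List.mem_cons_of_mem a h)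
    rw [opL_cons, opL_cons, leibniz_lie, D.lie_e_f_ne j a hja, zero_lie, zero_add, ih hj']

variable [Fintype 𝓘] [DecidableEq 𝓘]

lemma exists_list_count (c : 𝓘 → ℕ) : ∃ l : List 𝓘, ∀ i, l.count i = c i := by
  refine ⟨(∑ i : 𝓘, Multiset.replicate (c i) i).toList, fun i => ?_⟩
  have h1 : (∑ j : 𝓘, Multiset.replicate (c j) j).toList.count i
      = Multiset.count i (∑ j : 𝓘, Multiset.replicate (c j) j) := by
    rw [← Multiset.coe_count, Multiset.coe_toList]
  rw [h1, Multiset.count_sum']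
  have h2 : ∀ j : 𝓘, Multiset.count i (Multiset.replicate (c j) j)
      = if i = j then c j else 0 := by
    intro j
    rw [Multiset.count_replicate]
    by_cases h : i = j
    · subst h; simp
    · simp [h, Ne.symm h]
  rw [Finset.sum_congr rfl (fun j _ => h2 j), Finset.sum_ite_eq Finset.univ i c,
    if_pos (Finset.mem_univ i)]

end Aux6

/-- Proposition 1.13(b), inequality (1.14): let `H_1, …, H_s` be
pairwise distinct independent subsets of `J_λ` with `w_{H_t} • λ ∈ wt V` for each `t`,
where `w_{H_t} • λ = λ − Σ_{i∈H_t}(λ(α_i^∨)+1)α_i`.  Then for every `μ`,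
`dim V_μ ≥ Σ_t dim L(w_{H_t} • λ)_μ`, where `L(ν)` is the simple highest weight module
with highest weight `ν`. -/
theorem multiplicity_lower_bound
    {𝓘 : Type} [Fintype 𝓘] [DecidableEq 𝓘] {g : Type} [LieRing g] [LieAlgebra ℂ g]
    (D : Data 𝓘 g)
    (V : Type) [AddCommGroup V] [Module ℂ V] [LieRingModule g V] [LieModule ℂ g V]
    (lam : Module.Dual ℂ D.H) (v : V) (hV : IsHW D V lam v)
    (s : ℕ) (Hs : Fin s → Finset 𝓘) (hdist : Function.Injective Hs)
    (hind : ∀ t : Fin s, IndepSet D (↑(Hs t) : Set 𝓘))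
    (hsub : ∀ t : Fin s, (↑(Hs t) : Set 𝓘) ⊆ Jlam D lam)
    (hwt : ∀ t : Fin s,
      (lam - ∑ i ∈ Hs t, (lam (D.coroot i) + 1) • D.α i) ∈ wtSet D.H V)
    (L : Fin s → Type) [∀ t, AddCommGroup (L t)] [∀ t, Module ℂ (L t)]
    [∀ t, LieRingModule g (L t)] [∀ t, LieModule ℂ g (L t)]
    (lvec : ∀ t, L t)
    (hL : ∀ t : Fin s,
      IsHW D (L t) (lam - ∑ i ∈ Hs t, (lam (D.coroot i) + 1) • D.α i) (lvec t))
    (hLsimple : ∀ t : Fin s, ∀ N : LieSubmodule ℂ g (L t), N = ⊥ ∨ N = ⊤)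
    (μ : Module.Dual ℂ D.H) :
    ∑ t : Fin s, Module.finrank ℂ ↥(wtSpace D.H (L t) μ) ≤
      Module.finrank ℂ ↥(wtSpace D.H V μ) := by
  classical
  obtain ⟨hv0, hvwt, hve, hvgen⟩ := hV
  -- natural number coefficients
  have hnat : ∀ t : Fin s, ∀ i ∈ Hs t, ∃ n : ℕ, lam (D.coroot i) = (n : ℂ) :=
    fun t i hi => hsub t hi
  let nv : Fin s → 𝓘 → ℕ := fun t i => if h : i ∈ Hs t then (hnat t i h).choose + 1 else 0
  have nv_spec : ∀ t, ∀ i ∈ Hs t, ((nv t i : ℕ) : ℂ) = lam (D.coroot i) + 1 := by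
    intro t i hi
    simp only [nv, dif_pos hi]
    push_cast
    have hs := (hnat t i hi).choose_spec
    linear_combination -hs
  have nv_zero : ∀ t, ∀ i, i ∉ Hs t → nv t i = 0 := by
    intro t i hi; simp [nv, dif_neg hi]
  have nv_supp : ∀ t i, nv t i ≠ 0 → i ∈ Hs t := by
    intro t i h
    by_contra hc
    exact h (nv_zero t i hc)
  have nv_mem : ∀ t, ∀ i ∈ Hs t, nv t i ≠ 0 := by
    intro t i hi; simp [nv, dif_pos hi]
  have nv_inj : Function.Injective nv := by
    intro t t' h
    apply hdist
    ext i
    constructor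
    · intro hi
      exact nv_supp t' i (by rw [← h]; exact nv_mem t i hi)
    · intro hi
      exact nv_supp t i (by rw [h]; exact nv_mem t' i hi)
  -- the weights λ_t
  let lamt : Fin s → Module.Dual ℂ D.H := fun t => lam - ∑ i : 𝓘, ((nv t i : ℕ) : ℂ) • D.α i
  have lamt_eq : ∀ t, lamt t = lam - ∑ i ∈ Hs t, (lam (D.coroot i) + 1) • D.α i := by
    intro t
    simp only [lamt]
    congr 1
    rw [← Finset.sum_subset (Finset.subset_univ (Hs t)) (fun i _ hi => by
      rw [nv_zero t i hi]; simp)]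
    exact Finset.sum_congr rfl (fun i hi => by rw [nv_spec t i hi])
  -- the monomial words and the maximal vectors u t
  let wrd : Fin s → List 𝓘 := fun t => (exists_list_count (nv t)).choose
  have wrd_count : ∀ t i, (wrd t).count i = nv t i := fun t =>
    (exists_list_count (nv t)).choose_spec
  have wrd_mem : ∀ t, ∀ i ∈ wrd t, i ∈ Hs t := by
    intro t i hi
    refine nv_supp t i ?_
    rw [← wrd_count t i]
    exact fun hc => (List.count_eq_zero.1 hc) hi
  let u : Fin s → V := fun t => opL D (wrd t) v
  have hlsum_wrd : ∀ t, lsum D (wrd t) = ∑ i : 𝓘, ((nv t i : ℕ) : ℂ) • D.α i := by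
    intro t
    rw [lsum_eq_count]
    exact Finset.sum_congr rfl (fun i _ => by rw [wrd_count t i])
  have u_wt : ∀ t, u t ∈ wtSpace D.H V (lamt t) := by
    intro t
    have h := opL_wt D hvwt (wrd t)
    rwa [hlsum_wrd t] at h
  -- commutation
  have fcomm : ∀ (t : Fin s), ∀ a ∈ Hs t, ∀ b ∈ Hs t, ⁅D.f a, D.f b⁆ = 0 := by
    intro t a ha b hb
    by_cases hab : a = b
    · subst hab; exact lie_self _
    · exact f_comm D hab (hind t a ha b hb hab)
  have u_eq : ∀ (t : Fin s) (l : List 𝓘), (∀ i, l.count i = nv t i) → opL D l v = u t := by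
    intro t l hl
    have hperm : l.Perm (wrd t) :=
      List.perm_iff_count.2 (fun i => by rw [hl i, wrd_count t i])
    refine opL_perm D hperm (fun a ha b hb => fcomm t a ?_ b ?_) v
    · exact nv_supp t a (by rw [← hl a]; exact fun hc => (List.count_eq_zero.1 hc) ha)
    · exact nv_supp t b (by rw [← hl b]; exact fun hc => (List.count_eq_zero.1 hc) hb)
  -- e kills u t
  have u_e : ∀ (t : Fin s) (j : 𝓘), ⁅D.e j, u t⁆ = 0 := by
    intro t j
    by_cases hj : j ∈ Hs t
    · -- move all copies of j innermost
      obtain ⟨l', hl'⟩ := exists_list_count (𝓘 := 𝓘) (fun i => if i = j then 0 else nv t i)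
      have hl'' : ∀ i, (l' ++ List.replicate (nv t j) j).count i = nv t i := by
        intro i
        rw [List.count_append, hl' i, List.count_replicate]
        by_cases h : i = j
        · subst h; simp
        · have : (j == i) = false := by simpa using Ne.symm h
          simp [h, this]
      have hju : u t = opL D l' (opL D (List.replicate (nv t j) j) v) := by
        rw [← opL_append, u_eq t _ hl'']
      have hjl' : j ∉ l' := by
        have h0 : l'.count j = 0 := by simpa using hl' j
        exact List.count_eq_zero.1 h0
      obtain ⟨m, hm⟩ := hnat t j hj
      have hnvj : nv t j = m + 1 := by
        have h1 := nv_spec t j hj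
        rw [hm] at h1
        have h2 : ((nv t j : ℕ) : ℂ) = ((m + 1 : ℕ) : ℂ) := by push_cast; exact h1
        exact_mod_cast h2
      rw [hju, e_comm_opL D j l' hjl', hnvj, e_opL_replicate D j hvwt (hve j) m, hm,
        sub_self, zero_smul, opL_zero]
    · have hjw : j ∉ wrd t := by
        intro hc
        have h0 : (wrd t).count j = 0 := by rw [wrd_count t j]; exact nv_zero t j hj
        exact (List.count_eq_zero.1 h0) hc
      rw [e_comm_opL D j (wrd t) hjw, hve j, opL_zero]
  
  -- V is spanned by monomials
  have Vtop : monSpan D v = ⊤ := by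
    have h := lieSpan_eq_monLS D hvwt hve
    rw [hvgen] at h
    have h2 : ((⊤ : LieSubmodule ℂ g V) : Submodule ℂ V)
        = ((monLS D hvwt hve : LieSubmodule ℂ g V) : Submodule ℂ V) := by rw [h]
    rw [LieSubmodule.top_toSubmodule, monLS_coe] at h2
    exact h2.symm
  set G0 : Set V := Set.range (fun l : List 𝓘 => opL D l v) with hG0
  have hG0wt : ∀ x ∈ G0, ∃ κ, x ∈ wtSpace D.H V κ := by
    rintro x ⟨l, rfl⟩
    exact ⟨lam - lsum D l, opL_wt D hvwt l⟩
  have hspanG0 : ∀ x : V, x ∈ Submodule.span ℂ G0 := by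
    intro x
    show x ∈ monSpan D v
    rw [Vtop]
    trivial
  -- a sum manipulation helper
  have sum_split : ∀ (c0 cc : 𝓘 → ℕ),
      (∑ i : 𝓘, (((c0 i + cc i : ℕ)) : ℂ) • D.α i)
        = (∑ i : 𝓘, ((c0 i : ℕ) : ℂ) • D.α i) + ∑ i : 𝓘, ((cc i : ℕ) : ℂ) • D.α i := by
    intro c0 cc
    rw [← Finset.sum_add_distrib]
    refine Finset.sum_congr rfl (fun i _ => ?_)
    push_cast
    rw [add_smul]
  -- generators lying in a weight space have determined exponents
  have gen_cnt : ∀ (w : V) (κ0 : Module.Dual ℂ D.H) (c0 cc : 𝓘 → ℕ),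
      w ∈ wtSpace D.H V κ0 →
      κ0 = lam - ∑ i : 𝓘, ((c0 i : ℕ) : ℂ) • D.α i →
      ∀ l : List 𝓘, opL D l w ≠ 0 →
      opL D l w ∈ wtSpace D.H V (lam - ∑ i : 𝓘, ((cc i : ℕ) : ℂ) • D.α i) →
      ∀ i, c0 i + l.count i = cc i := by
    intro w κ0 c0 cc hw hκ0 l hne hlwt
    have h1 : κ0 - lsum D l = lam - ∑ i : 𝓘, ((cc i : ℕ) : ℂ) • D.α i := by
      by_contra hc
      exact hne (wt_disjoint D (opL_wt D hw l) hlwt hc)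
    rw [hκ0, lsum_eq_count, sub_sub, ← Finset.sum_add_distrib] at h1
    have h2 : ∑ i : 𝓘, (((c0 i : ℕ) : ℂ) + ((l.count i : ℕ) : ℂ)) • D.α i
        = ∑ i : 𝓘, ((cc i : ℕ) : ℂ) • D.α i := by
      rw [← sub_right_inj (a := lam)]
      rw [← h1]
      congr 1
      exact Finset.sum_congr rfl (fun i _ => by rw [add_smul])
    have h3 := coeff_eq D h2
    intro i
    have h4 := congrFun h3 i
    exact_mod_cast h4
  -- finite dimensionality of the weight spaces of V
  have Vfd : ∀ μ' : Module.Dual ℂ D.H, FiniteDimensional ℂ ↥(wtSpace D.H V μ') := by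
    intro μ'
    by_cases hex : ∃ c : 𝓘 → ℕ, μ' = lam - ∑ i : 𝓘, ((c i : ℕ) : ℂ) • D.α i
    · obtain ⟨c, hc⟩ := hex
      have hfin : ((fun l : List 𝓘 => opL D l v) '' {l | ∀ i, l.count i = c i}).Finite :=
        (finite_fixed_count c).image _
      have hfd : FiniteDimensional ℂ ↥(Submodule.span ℂ
          ((fun l : List 𝓘 => opL D l v) '' {l | ∀ i, l.count i = c i})) :=
        FiniteDimensional.span_of_finite ℂ hfin
      refine Submodule.finiteDimensional_of_le (S₂ := Submodule.span ℂ
        ((fun l : List 𝓘 => opL D l v) '' {l | ∀ i, l.count i = c i})) ?_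
      intro x hx
      have hx1 : x ∈ Submodule.span ℂ (G0 ∩ (wtSpace D.H V μ' : Set V)) :=
        span_wt D G0 hG0wt μ' (hspanG0 x) hx
      refine Submodule.span_le.2 ?_ hx1
      rintro y ⟨⟨l, rfl⟩, hywt⟩
      beta_reduce
      by_cases hy0 : opL D l v = 0
      · rw [hy0]; exact Submodule.zero_mem _
      · have hcnt := gen_cnt v lam (fun _ => 0) c hvwt (by simp) l hy0 (hc ▸ hywt)
        refine Submodule.subset_span ⟨l, fun i => ?_, rfl⟩
        simpa using hcnt i
    · -- no expression: the weight space is zero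
      have hbot : wtSpace D.H V μ' = ⊥ := by
        rw [Submodule.eq_bot_iff]
        intro x hx
        have hx1 : x ∈ Submodule.span ℂ (G0 ∩ (wtSpace D.H V μ' : Set V)) :=
          span_wt D G0 hG0wt μ' (hspanG0 x) hx
        have hsub2 : G0 ∩ (wtSpace D.H V μ' : Set V) ⊆ (↑(⊥ : Submodule ℂ V) : Set V) := by
          rintro y ⟨⟨l, rfl⟩, hywt⟩
          beta_reduce
          by_cases hy0 : opL D l v = 0
          · rw [hy0]; exact Submodule.zero_mem _
          · exfalso
            have h1 : lam - lsum D l = μ' := by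
              by_contra hcon
              exact hy0 (wt_disjoint D (opL_wt D hvwt l) hywt hcon)
            exact hex ⟨fun i => l.count i, by rw [← h1, lsum_eq_count]⟩
        have := Submodule.span_le.2 hsub2 hx1
        simpa using this
      rw [hbot]
      infer_instance
  -- the vectors u t are nonzero
  have u_ne : ∀ t, u t ≠ 0 := by
    intro t hu0
    have hwt' : wtSpace D.H V (lam - ∑ i ∈ Hs t, (lam (D.coroot i) + 1) • D.α i) ≠ ⊥ := hwt t
    apply hwt'
    rw [← lamt_eq t]
    rw [Submodule.eq_bot_iff]
    intro x hx
    have hx1 : x ∈ Submodule.span ℂ (G0 ∩ (wtSpace D.H V (lamt t) : Set V)) :=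
      span_wt D G0 hG0wt _ (hspanG0 x) hx
    have hsub2 : G0 ∩ (wtSpace D.H V (lamt t) : Set V) ⊆ (↑(⊥ : Submodule ℂ V) : Set V) := by
      rintro y ⟨⟨l, rfl⟩, hywt⟩
      beta_reduce
      by_cases hy0 : opL D l v = 0
      · rw [hy0]; exact Submodule.zero_mem _
      · have hcnt := gen_cnt v lam (fun _ => 0) (nv t) hvwt (by simp) l hy0 hywt
        have hcnt' : ∀ i, l.count i = nv t i := fun i => by simpa using hcnt i
        show opL D l v ∈ (↑(⊥ : Submodule ℂ V) : Set V)
        rw [u_eq t l hcnt', hu0]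
        exact Submodule.zero_mem _
    have := Submodule.span_le.2 hsub2 hx1
    simpa using this
  
  -- the Lie submodules generated by families of the u t
  let GS : Finset (Fin s) → Set V := fun S =>
    ⋃ t ∈ S, Set.range (fun l : List 𝓘 => opL D l (u t))
  have GS_mem : ∀ (S : Finset (Fin s)) (x : V),
      x ∈ GS S ↔ ∃ t ∈ S, ∃ l : List 𝓘, opL D l (u t) = x := by
    intro S x
    simp only [GS, Set.mem_iUnion, Set.mem_range]
    tauto
  have GS_wt : ∀ S, ∀ x ∈ GS S, ∃ κ, x ∈ wtSpace D.H V κ := by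
    intro S x hx
    obtain ⟨t, _, l, rfl⟩ := (GS_mem S x).1 hx
    exact ⟨lamt t - lsum D l, opL_wt D (u_wt t) l⟩
  have GS_stab : ∀ S : Finset (Fin s), ∀ x : g, ∀ y ∈ GS S,
      ⁅x, y⁆ ∈ Submodule.span ℂ (GS S) := by
    intro S x y hy
    obtain ⟨t, ht, l, rfl⟩ := (GS_mem S y).1 hy
    have h1 : ⁅x, opL D l (u t)⁆ ∈ monSpan D (u t) :=
      monSpan_lie_stable D (u_wt t) (u_e t) x _ (opL_mem_monSpan D (u t) l)
    have h2 : Set.range (fun l : List 𝓘 => opL D l (u t)) ⊆ GS S := by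
      intro w hw
      obtain ⟨l', rfl⟩ := hw
      exact (GS_mem S _).2 ⟨t, ht, l', rfl⟩
    exact Submodule.span_mono h2 h1
  let MS : Finset (Fin s) → LieSubmodule ℂ g V := fun S => mkLS (GS S) (GS_stab S)
  have MS_coe : ∀ S, ((MS S : LieSubmodule ℂ g V) : Submodule ℂ V)
      = Submodule.span ℂ (GS S) := fun S => rfl
  have MS_mono : ∀ S S' : Finset (Fin s), S ⊆ S' →
      ((MS S : LieSubmodule ℂ g V) : Submodule ℂ V)
        ≤ ((MS S' : LieSubmodule ℂ g V) : Submodule ℂ V) := by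
    intro S S' hss
    refine Submodule.span_mono ?_
    intro w hw
    obtain ⟨t, ht, l, rfl⟩ := (GS_mem S w).1 hw
    exact (GS_mem S' _).2 ⟨t, hss ht, l, rfl⟩
  have mon_le_MS : ∀ (S : Finset (Fin s)), ∀ t ∈ S,
      monSpan D (u t) ≤ Submodule.span ℂ (GS S) := by
    intro S t ht
    refine Submodule.span_mono ?_
    intro w hw
    obtain ⟨l, rfl⟩ := hw
    exact (GS_mem S _).2 ⟨t, ht, l, rfl⟩
  -- the key induction
  have key : ∀ (n : ℕ) (S : Finset (Fin s)), S.card ≤ n →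
      ∑ t ∈ S, Module.finrank ℂ ↥(wtSpace D.H (L t) μ) ≤
        Module.finrank ℂ
          ↥(((MS S : LieSubmodule ℂ g V) : Submodule ℂ V) ⊓ wtSpace D.H V μ) := by
    intro n
    induction n with
    | zero =>
      intro S hS
      rw [Finset.card_eq_zero.1 (Nat.le_zero.1 hS)]
      simp
    | succ n ihn =>
      intro S hS
      rcases S.eq_empty_or_nonempty with rfl | hne
      · simp
      obtain ⟨t0, ht0S, ht0min⟩ := S.exists_min_image (fun t => ∑ i : 𝓘, nv t i) hne
      have hcard : (S.erase t0).card ≤ n := by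
        have := Finset.card_erase_of_mem ht0S
        omega
      have IH := ihn (S.erase t0) hcard
      set N' : LieSubmodule ℂ g V := MS (S.erase t0) with hN'def
      have hN'le : (N' : Submodule ℂ V) ≤ ((MS S : LieSubmodule ℂ g V) : Submodule ℂ V) :=
        MS_mono _ _ (Finset.erase_subset t0 S)
      -- u t0 is not in N'
      have hu0N : u t0 ∉ N' := by
        intro hmem
        have hx1 : u t0 ∈ Submodule.span ℂ (GS (S.erase t0) ∩
            (wtSpace D.H V (lamt t0) : Set V)) :=
          span_wt D _ (GS_wt _) (lamt t0) hmem (u_wt t0)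
        have hsub2 : GS (S.erase t0) ∩ (wtSpace D.H V (lamt t0) : Set V)
            ⊆ (↑(⊥ : Submodule ℂ V) : Set V) := by
          rintro y ⟨hyG, hywt⟩
          obtain ⟨t, ht, l, rfl⟩ := (GS_mem _ y).1 hyG
          by_cases hy0 : opL D l (u t) = 0
          · rw [hy0]; exact Submodule.zero_mem _
          · exfalso
            have hcnt := gen_cnt (u t) (lamt t) (nv t) (nv t0) (u_wt t) rfl l hy0 hywt
            have hle' : ∀ i, nv t i ≤ nv t0 i := fun i => Nat.le.intro (hcnt i)
            have hsum1 : ∑ i : 𝓘, nv t i ≤ ∑ i : 𝓘, nv t0 i :=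
              Finset.sum_le_sum (fun i _ => hle' i)
            have hsum2 : ∑ i : 𝓘, nv t0 i ≤ ∑ i : 𝓘, nv t i :=
              ht0min t (Finset.mem_of_mem_erase ht)
            have hall := (Finset.sum_eq_sum_iff_of_le (fun i _ => hle' i)).1
              (le_antisymm hsum1 hsum2)
            have heqt : t = t0 := nv_inj (funext (fun i => hall i (Finset.mem_univ i)))
            exact Finset.ne_of_mem_erase ht heqt
        have := Submodule.span_le.2 hsub2 hx1
        rw [Submodule.mem_bot] at this
        exact u_ne t0 this
      -- quotient setup
      set π : V →ₗ[ℂ] V ⧸ N' := (LieSubmodule.Quotient.mk' N').toLinearMap with hπdef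
      have hπlie : ∀ (x : g) (w : V), π ⁅x, w⁆ = ⁅x, π w⁆ :=
        fun x w => (LieSubmodule.Quotient.mk' N').map_lie x w
      have hz0 : π (u t0) ≠ 0 := by
        intro hc
        exact hu0N ((LieSubmodule.Quotient.mk_eq_zero N').1 hc)
      have hzwt : π (u t0) ∈ wtSpace D.H (V ⧸ N') (lamt t0) := wt_map D π hπlie (u_wt t0)
      have hze : ∀ j : 𝓘, ⁅D.e j, π (u t0)⁆ = 0 := fun j => by
        rw [← hπlie, u_e t0 j, map_zero]
      obtain ⟨hl0, hlwt0, hle0, hlgen0⟩ := hL t0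
      have hlwt' : lvec t0 ∈ wtSpace D.H (L t0) (lamt t0) := by
        rw [lamt_eq t0]; exact hlwt0
      set z : (V ⧸ N') × L t0 := (π (u t0), lvec t0) with hzdef
      have hzw : z ∈ wtSpace D.H ((V ⧸ N') × L t0) (lamt t0) :=
        (wtSpace_prod D (lamt t0) z).2 ⟨hzwt, hlwt'⟩
      have hzee : ∀ j : 𝓘, ⁅D.e j, z⁆ = 0 := by
        intro j
        rw [prod_bracket]
        show ((⁅D.e j, z.1⁆ : V ⧸ N'), (⁅D.e j, z.2⁆ : L t0)) = (0, 0)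
        rw [Prod.mk.injEq]
        exact ⟨hze j, hle0 j⟩
      set GT : Set ((V ⧸ N') × L t0) := Set.range (fun l : List 𝓘 => opL D l z) with hGTdef
      have hGTwt : ∀ x ∈ GT, ∃ κ, x ∈ wtSpace D.H ((V ⧸ N') × L t0) κ := by
        rintro x ⟨l, rfl⟩
        exact ⟨lamt t0 - lsum D l, opL_wt D hzw l⟩
      have Tstab := monSpan_lie_stable D hzw hzee
      -- injectivity on the first coordinate
      have hKL : ∀ zz ∈ monSpan D z, Prod.fst zz = (0 : V ⧸ N') → zz = 0 := by
        have KLlie : ∀ x : g, ∀ b ∈ Submodule.comap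
            (LinearMap.inr ℂ (V ⧸ N') (L t0)) (monSpan D z),
            ⁅x, b⁆ ∈ Submodule.comap (LinearMap.inr ℂ (V ⧸ N') (L t0)) (monSpan D z) := by
          intro x b hb
          have h1 : ⁅x, ((0 : V ⧸ N'), b)⁆ ∈ monSpan D z := Tstab x _ hb
          have h2 : ⁅x, ((0 : V ⧸ N'), b)⁆ = ((0 : V ⧸ N'), ⁅x, b⁆) := by
            rw [prod_bracket]
            show ((⁅x, (0 : V ⧸ N')⁆ : V ⧸ N'), (⁅x, b⁆ : L t0)) = _
            rw [lie_zero]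
          rw [h2] at h1
          exact h1
        set KL : LieSubmodule ℂ g (L t0) := LieSubmodule.mk
          (Submodule.comap (LinearMap.inr ℂ (V ⧸ N') (L t0)) (monSpan D z))
          (fun {x} {m} hm => KLlie x m hm) with hKLdef
        rcases hLsimple t0 KL with hbot | htop
        · intro zz hzz h1
          have hzz2 : ((0 : V ⧸ N'), zz.2) ∈ monSpan D z := by
            have heq : ((0 : V ⧸ N'), zz.2) = zz := by
              rw [← h1]
            rwa [heq]
          have hzzKL : zz.2 ∈ KL := hzz2
          rw [hbot] at hzzKL
          have hz2 : zz.2 = 0 := (LieSubmodule.mem_bot _).1 hzzKL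
          have heq2 : zz = (zz.1, zz.2) := rfl
          rw [heq2, h1, hz2]
          rfl
        · exfalso
          have h1 : ((0 : V ⧸ N'), lvec t0) ∈ monSpan D z := by
            have hlv : lvec t0 ∈ KL := by rw [htop]; trivial
            exact hlv
          have h2 : ((0 : V ⧸ N'), lvec t0) ∈ wtSpace D.H ((V ⧸ N') × L t0) (lamt t0) :=
            (wtSpace_prod D (lamt t0) _).2 ⟨Submodule.zero_mem _, hlwt'⟩
          have h3 := span_wt D GT hGTwt (lamt t0) h1 h2
          have h4 : GT ∩ (wtSpace D.H ((V ⧸ N') × L t0) (lamt t0) : Set _)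
              ⊆ (↑(Submodule.span ℂ ({z} : Set ((V ⧸ N') × L t0))) : Set _) := by
            rintro y ⟨⟨l, rfl⟩, hywt⟩
            beta_reduce
            by_cases hy0 : opL D l z = 0
            · rw [hy0]; exact Submodule.zero_mem _
            · have hwl : lamt t0 - lsum D l = lamt t0 := by
                by_contra hcon
                exact hy0 (wt_disjoint D (opL_wt D hzw l) hywt hcon)
              have h5 : lsum D l = 0 := sub_eq_self.1 hwl
              have h6 : ∀ i : 𝓘, l.count i = 0 := by
                have h7 : ∑ i : 𝓘, ((l.count i : ℕ) : ℂ) • D.α i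
                    = ∑ i : 𝓘, (((fun _ => (0:ℕ)) i : ℕ) : ℂ) • D.α i := by
                  rw [← lsum_eq_count, h5]
                  simp
                intro i
                have h8 := congrFun (coeff_eq D h7) i
                exact_mod_cast h8
              rw [count_zero_eq_nil h6, opL_nil]
              exact Submodule.subset_span rfl
          have h7 := Submodule.span_le.2 h4 h3
          rw [Submodule.mem_span_singleton] at h7
          obtain ⟨c, hc7⟩ := h7
          have hc2 : c • lvec t0 = lvec t0 := congrArg Prod.snd hc7
          have hc1 : c • π (u t0) = (0 : V ⧸ N') := congrArg Prod.fst hc7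
          have hc3 : c = 1 := by
            by_contra hcne
            have hzero : (c - 1) • lvec t0 = 0 := by
              rw [sub_smul, hc2, one_smul, sub_self]
            rcases smul_eq_zero.1 hzero with h | h
            · exact hcne (sub_eq_zero.1 h)
            · exact hl0 h
          rw [hc3, one_smul] at hc1
          exact hz0 hc1
      -- first projection lands in the image of Mμ
      have hfst : ∀ zz ∈ monSpan D z ⊓ wtSpace D.H ((V ⧸ N') × L t0) μ,
          Prod.fst zz ∈ Submodule.map π
            (((MS S : LieSubmodule ℂ g V) : Submodule ℂ V) ⊓ wtSpace D.H V μ) := by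
        intro zz hzz
        obtain ⟨hzT, hzwt'⟩ := Submodule.mem_inf.1 hzz
        have h3 : zz ∈ Submodule.span ℂ
            (GT ∩ (wtSpace D.H ((V ⧸ N') × L t0) μ : Set _)) :=
          span_wt D GT hGTwt μ hzT hzwt'
        have h4 : zz.1 ∈ Submodule.map (LinearMap.fst ℂ (V ⧸ N') (L t0))
            (Submodule.span ℂ (GT ∩ (wtSpace D.H ((V ⧸ N') × L t0) μ : Set _))) :=
          Submodule.mem_map_of_mem h3
        rw [Submodule.map_span] at h4
        refine Submodule.span_le.2 ?_ h4
        rintro y ⟨w, ⟨hwG, hwwt⟩, rfl⟩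
        obtain ⟨l, rfl⟩ := hwG
        beta_reduce
        by_cases hy0 : opL D l z = 0
        · have : (LinearMap.fst ℂ (V ⧸ N') (L t0)) (opL D l z) = 0 := by
            rw [hy0, map_zero]
          rw [this]
          exact Submodule.zero_mem _
        · have hwl : lamt t0 - lsum D l = μ := by
            by_contra hcon
            exact hy0 (wt_disjoint D (opL_wt D hzw l) hwwt hcon)
          have h5 : opL D l (u t0) ∈
              ((MS S : LieSubmodule ℂ g V) : Submodule ℂ V) ⊓ wtSpace D.H V μ := by
            refine Submodule.mem_inf.2
              ⟨mon_le_MS S t0 ht0S (opL_mem_monSpan D (u t0) l), ?_⟩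
            have h6 := opL_wt D (u_wt t0) l
            rwa [hwl] at h6
          have he1 : (LinearMap.fst ℂ (V ⧸ N') (L t0)) (opL D l z) = opL D l (π (u t0)) :=
            opL_map D (LinearMap.fst ℂ (V ⧸ N') (L t0)) (fun x w => rfl) l z
          have he2 : π (opL D l (u t0)) = opL D l (π (u t0)) := opL_map D π hπlie l (u t0)
          rw [he1, ← he2]
          exact Submodule.mem_map_of_mem h5
      -- second projection surjects onto the weight space of L t0
      have hsnd : ∀ b ∈ wtSpace D.H (L t0) μ,
          ∃ zz, zz ∈ monSpan D z ⊓ wtSpace D.H ((V ⧸ N') × L t0) μ ∧ Prod.snd zz = b := by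
        intro b hb
        have P2lie : ∀ x : g, ∀ y ∈ Submodule.map
            (LinearMap.snd ℂ (V ⧸ N') (L t0)) (monSpan D z),
            ⁅x, y⁆ ∈ Submodule.map (LinearMap.snd ℂ (V ⧸ N') (L t0)) (monSpan D z) := by
          rintro x y ⟨w, hw, rfl⟩
          exact ⟨⁅x, w⁆, Tstab x w hw, rfl⟩
        set P2 : LieSubmodule ℂ g (L t0) := LieSubmodule.mk
          (Submodule.map (LinearMap.snd ℂ (V ⧸ N') (L t0)) (monSpan D z))
          (fun {x} {m} hm => P2lie x m hm) with hP2def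
        have hP2top : P2 = ⊤ := by
          rcases hLsimple t0 P2 with h | h
          · exfalso
            have hlv : lvec t0 ∈ P2 := ⟨z, self_mem_monSpan D z, rfl⟩
            rw [h] at hlv
            exact hl0 ((LieSubmodule.mem_bot _).1 hlv)
          · exact h
        have hbP2 : b ∈ P2 := by rw [hP2top]; trivial
        obtain ⟨w, hwT, hwb⟩ := hbP2
        obtain ⟨sf, wf, hwf, hsumf⟩ := span_decomp D GT hGTwt hwT
        have hcomp : ∀ ν ∈ sf, (wf ν).2 ∈ wtSpace D.H (L t0) ν := by
          intro ν hν
          have h9 := (Submodule.mem_inf.1 (hwf ν hν)).2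
          exact ((wtSpace_prod D ν _).1 h9).2
        have hsum2 : ∑ ν ∈ sf, (wf ν).2 = b := by
          rw [← hwb]
          have h9 := congrArg (LinearMap.snd ℂ (V ⧸ N') (L t0)) hsumf
          rw [map_sum] at h9
          exact h9
        obtain ⟨hext1, hext2, hext3⟩ := wt_extract D sf (fun ν => (wf ν).2) hcomp hb hsum2
        by_cases hμs : μ ∈ sf
        · refine ⟨wf μ, Submodule.mem_inf.2
            ⟨?_, (Submodule.mem_inf.1 (hwf μ hμs)).2⟩, hext2 hμs⟩
          have h9 := (Submodule.mem_inf.1 (hwf μ hμs)).1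
          exact Submodule.span_mono Set.inter_subset_left h9
        · exact ⟨0, Submodule.zero_mem _, (hext3 hμs).symm⟩
      -- dimension bookkeeping
      haveI hfdwt : FiniteDimensional ℂ ↥(wtSpace D.H V μ) := Vfd μ
      set Mμ : Submodule ℂ V :=
        ((MS S : LieSubmodule ℂ g V) : Submodule ℂ V) ⊓ wtSpace D.H V μ with hMμdef
      haveI : FiniteDimensional ℂ ↥Mμ := Submodule.finiteDimensional_of_le inf_le_right
      set PM : Submodule ℂ (V ⧸ N') := Submodule.map π Mμ with hPMdef
      haveI : FiniteDimensional ℂ ↥PM := Module.Finite.map Mμ π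
      set Twt : Submodule ℂ ((V ⧸ N') × L t0) :=
        monSpan D z ⊓ wtSpace D.H ((V ⧸ N') × L t0) μ with hTwtdef
      set ψ1 : ↥Twt →ₗ[ℂ] V ⧸ N' :=
        (LinearMap.fst ℂ (V ⧸ N') (L t0)).comp Twt.subtype with hψ1def
      have hψ1inj : Function.Injective ψ1 := by
        refine (injective_iff_map_eq_zero ψ1).2 ?_
        intro zz hzz
        have h9 : (zz : (V ⧸ N') × L t0) = 0 :=
          hKL zz ((Submodule.mem_inf.1 zz.2).1) hzz
        exact Subtype.ext h9
      have hrange1 : ∀ zz : ↥Twt, ψ1 zz ∈ PM := fun zz => hfst zz zz.2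
      set ψ1' : ↥Twt →ₗ[ℂ] ↥PM := LinearMap.codRestrict PM ψ1 hrange1 with hψ1'def
      have hψ1'inj : Function.Injective ψ1' := fun a b hab =>
        hψ1inj (congrArg Subtype.val hab)
      haveI : FiniteDimensional ℂ ↥Twt := FiniteDimensional.of_injective ψ1' hψ1'inj
      have hr1 : Module.finrank ℂ ↥Twt ≤ Module.finrank ℂ ↥PM :=
        LinearMap.finrank_le_finrank_of_injective hψ1'inj
      set ψ2 : ↥Twt →ₗ[ℂ] L t0 :=
        (LinearMap.snd ℂ (V ⧸ N') (L t0)).comp Twt.subtype with hψ2def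
      have hr2 : Module.finrank ℂ ↥(wtSpace D.H (L t0) μ) ≤ Module.finrank ℂ ↥Twt := by
        have hrange2 : LinearMap.range ψ2 = wtSpace D.H (L t0) μ := by
          apply le_antisymm
          · rintro b ⟨zz, rfl⟩
            have h9 := (Submodule.mem_inf.1 zz.2).2
            exact ((wtSpace_prod D μ _).1 h9).2
          · intro b hb
            obtain ⟨zz, hzzT, hzz2⟩ := hsnd b hb
            exact ⟨⟨zz, hzzT⟩, hzz2⟩
        have h9 : Module.finrank ℂ ↥(wtSpace D.H (L t0) μ)
            = Module.finrank ℂ ↥(LinearMap.range ψ2) := by rw [hrange2]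
        rw [h9]
        exact LinearMap.finrank_range_le ψ2
      -- rank-nullity for the quotient map restricted to Mμ
      set φM : ↥Mμ →ₗ[ℂ] V ⧸ N' := π.comp Mμ.subtype with hφMdef
      have hrange3 : LinearMap.range φM = PM := by
        rw [hφMdef, LinearMap.range_comp, Submodule.range_subtype, hPMdef]
      have hker3 : Module.finrank ℂ ↥(LinearMap.ker φM)
          = Module.finrank ℂ ↥((N' : Submodule ℂ V) ⊓ wtSpace D.H V μ) := by
        have hNM : (N' : Submodule ℂ V) ⊓ Mμ
            = (N' : Submodule ℂ V) ⊓ wtSpace D.H V μ := by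
          rw [hMμdef, ← inf_assoc, inf_eq_left.2 hN'le]
        have hkereq : LinearMap.ker φM
            = Submodule.comap Mμ.subtype ((N' : Submodule ℂ V) ⊓ Mμ) := by
          ext zz
          simp only [LinearMap.mem_ker, Submodule.mem_comap, hφMdef, LinearMap.comp_apply,
            Submodule.subtype_apply, Submodule.mem_inf]
          constructor
          · intro h
            exact ⟨(LieSubmodule.Quotient.mk_eq_zero N').1 h, zz.2⟩
          · intro h
            exact (LieSubmodule.Quotient.mk_eq_zero N').2 h.1
        have hle2 : (N' : Submodule ℂ V) ⊓ Mμ ≤ Mμ := inf_le_right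
        rw [hkereq, ← hNM]
        exact (Submodule.comapSubtypeEquivOfLe hle2).finrank_eq
      have hrank : Module.finrank ℂ ↥PM
          + Module.finrank ℂ ↥((N' : Submodule ℂ V) ⊓ wtSpace D.H V μ)
          = Module.finrank ℂ ↥Mμ := by
        rw [← hrange3, ← hker3]
        exact LinearMap.finrank_range_add_finrank_ker φM
      -- assemble
      rw [← Finset.sum_erase_add S _ ht0S]
      have hstep : ∑ t ∈ S.erase t0, Module.finrank ℂ ↥(wtSpace D.H (L t) μ)
          + Module.finrank ℂ ↥(wtSpace D.H (L t0) μ)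
          ≤ Module.finrank ℂ ↥((N' : Submodule ℂ V) ⊓ wtSpace D.H V μ)
            + Module.finrank ℂ ↥PM :=
        add_le_add IH (le_trans hr2 hr1)
      refine le_trans hstep ?_
      rw [add_comm]
      exact le_of_eq hrank
  -- conclusion
  have hfinal := key s Finset.univ (by simp)
  refine le_trans hfinal ?_
  haveI := Vfd μ
  exact Submodule.finrank_mono inf_le_right

end KM
end
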